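/- arXiv:1009.0029 — 8 statements merged into one kernel-verified Lean document; each statement's English description precedes it below -/
import Mathlib

section
/- Let K be a field, Q a finite acyclic quiver, and x, y vertices of Q. For each vertex w set c_w = n_{xw}·n_{yw} − Σ_{α ∈ Q₁ with t(α) = w} n_{x,s(α)}·n_{y,s(α)}. Then every c_w is a nonnegative integer, and there is an isomorphism of representations P(x) ⊗ P(y) ≅ ⊕_{w ∈ Q₀} P(w)^{⊕ c_w}. -/
open CategoryTheory MonoidalCategory Limits

noncomputable instance (K : Type) [Field K] (V : Type) [Quiver V] :
    HasFiniteBiproducts (Paths V ⥤ ModuleCat K) :=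
  HasFiniteBiproducts.of_hasFiniteProducts

/-- The indecomposable projective representation `P(x)`: at a vertex `z` it is the free
`K`-module on the set of paths from `x` to `z`, and a path acts by concatenation. -/
noncomputable def stdProj (K : Type) [Field K] {V : Type} [Quiver V] (x : V) :
    Paths V ⥤ ModuleCat K :=
  Paths.lift
    { obj := fun z => ModuleCat.of K (Quiver.Path x z →₀ K)
      map := fun {a b} α =>
        ModuleCat.ofHom (Finsupp.lmapDomain K K (fun p : Quiver.Path x a => p.cons α) :
          (Quiver.Path x a →₀ K) →ₗ[K] (Quiver.Path x b →₀ K)) }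

set_option maxHeartbeats 1000000


section Combinatorics
variable {V : Type} [Quiver.{0} V]

def IsSplit (x y w : V) (pq : Quiver.Path x w × Quiver.Path y w) : Prop :=
  ∃ a : Σ z : V, (z ⟶ w), ∃ p : Quiver.Path x a.1, ∃ q : Quiver.Path y a.1,
    pq = (p.cons a.2, q.cons a.2)

abbrev Prim (x y w : V) : Type := {pq : Quiver.Path x w × Quiver.Path y w // ¬ IsSplit x y w pq}

lemma cons_pair_inj {x y w z z' : V} {α : z ⟶ w} {α' : z' ⟶ w}
    {p : Quiver.Path x z} {p' : Quiver.Path x z'} {q : Quiver.Path y z} {q' : Quiver.Path y z'}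
    (h1 : p.cons α = p'.cons α') (h2 : q.cons α = q'.cons α') :
    (⟨⟨z, α⟩, p, q⟩ : Σ a : Σ v : V, (v ⟶ w), Quiver.Path x a.1 × Quiver.Path y a.1)
      = ⟨⟨z', α'⟩, p', q'⟩ := by
  injection h1 with hz hw hp hα
  subst hz
  rw [eq_of_heq hp, eq_of_heq hα]
  injection h2 with _ _ hq _
  rw [hq]

open Classical in
noncomputable def splitEquiv (x y w : V) :
    (Quiver.Path x w × Quiver.Path y w) ≃
      (Prim x y w ⊕ Σ a : Σ z : V, (z ⟶ w), Quiver.Path x a.1 × Quiver.Path y a.1) where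
  toFun pq :=
    if h : IsSplit x y w pq then
      .inr ⟨h.choose, h.choose_spec.choose, h.choose_spec.choose_spec.choose⟩
    else .inl ⟨pq, h⟩
  invFun s :=
    match s with
    | .inl pr => pr.1
    | .inr ⟨a, p, q⟩ => (p.cons a.2, q.cons a.2)
  left_inv pq := by
    by_cases h : IsSplit x y w pq
    · simp only [dif_pos h]
      exact h.choose_spec.choose_spec.choose_spec.symm
    · simp only [dif_neg h]
  right_inv s := by
    rcases s with ⟨pq, hpq⟩ | ⟨⟨z, α⟩, p, q⟩
    · simp only [dif_neg hpq]
    · have h : IsSplit x y w (p.cons α, q.cons α) := ⟨⟨z, α⟩, p, q, rfl⟩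
      simp only [dif_pos h]
      congr 1
      have hs := h.choose_spec.choose_spec.choose_spec
      exact (cons_pair_inj (congrArg Prod.fst hs) (congrArg Prod.snd hs)).symm

def assemble (x y : V) (z : V) :
    (Σ w : V, Prim x y w × Quiver.Path w z) → Quiver.Path x z × Quiver.Path y z :=
  fun s => (s.2.1.1.1.comp s.2.2, s.2.1.1.2.comp s.2.2)

lemma assemble_inj_aux (x y : V) {w : V} (pr : Prim x y w) {z : V} (r : Quiver.Path w z) :
    ∀ {w' : V} (pr' : Prim x y w') (r' : Quiver.Path w' z),
      pr.1.1.comp r = pr'.1.1.comp r' → pr.1.2.comp r = pr'.1.2.comp r' →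
      (⟨w, pr, r⟩ : Σ u : V, Prim x y u × Quiver.Path u z) = ⟨w', pr', r'⟩ := by
  induction r with
  | nil =>
    intro w' pr' r' h1 h2
    cases r' with
    | nil =>
      simp only [Quiver.Path.comp_nil] at h1 h2
      rw [show pr = pr' from Subtype.ext (Prod.ext h1 h2)]
    | cons r₀ α =>
      exact absurd ⟨⟨_, α⟩, pr'.1.1.comp r₀, pr'.1.2.comp r₀,
        Prod.ext (by simpa using h1) (by simpa using h2)⟩ pr.2
  | cons r₀ α ih =>
    intro w' pr' r' h1 h2
    cases r' with
    | nil =>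
      exact absurd ⟨⟨_, α⟩, pr.1.1.comp r₀, pr.1.2.comp r₀,
        Prod.ext (by simpa using h1.symm) (by simpa using h2.symm)⟩ pr'.2
    | cons r₀' α' =>
      rw [Quiver.Path.comp_cons, Quiver.Path.comp_cons] at h1 h2
      injection h1 with hm hw hp hα
      subst hm
      injection h2 with _ _ hq _
      obtain rfl := eq_of_heq hα
      have key := ih pr' r₀' (eq_of_heq hp) hq
      injection key with k1 k2
      subst k1
      obtain ⟨hpr, hr⟩ := Prod.ext_iff.mp (eq_of_heq k2)
      dsimp at hpr hr
      rw [hpr, hr]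

lemma assemble_injective (x y z : V) : Function.Injective (assemble x y z) := by
  rintro ⟨w, pr, r⟩ ⟨w', pr', r'⟩ h
  rw [Prod.ext_iff] at h
  exact assemble_inj_aux x y pr r pr' r' h.1 h.2

lemma assemble_surjective (x y z : V) : Function.Surjective (assemble x y z) := by
  suffices H : ∀ (n : ℕ) {z : V} (p : Quiver.Path x z) (q : Quiver.Path y z), p.length = n →
      ∃ s, assemble x y z s = (p, q) by
    rintro ⟨p, q⟩; exact H p.length p q rfl
  intro n
  induction n using Nat.strong_induction_on with
  | _ n IH =>
    intro z p q hn
    by_cases h : IsSplit x y z (p, q)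
    · obtain ⟨⟨m, α⟩, p₀, q₀, hpq⟩ := h
      rw [Prod.ext_iff] at hpq
      obtain ⟨hp, hq⟩ := hpq
      subst hp; subst hq; subst hn
      obtain ⟨⟨w, pr, r⟩, hs⟩ := IH p₀.length (by simp [Quiver.Path.length_cons]) p₀ q₀ rfl
      rw [Prod.ext_iff] at hs
      refine ⟨⟨w, pr, r.cons α⟩, ?_⟩
      dsimp [assemble] at hs ⊢
      rw [hs.1, hs.2]
    · exact ⟨⟨z, ⟨(p, q), h⟩, Quiver.Path.nil⟩, by simp [assemble]⟩

end Combinatorics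


section Finiteness
variable {V : Type} [Quiver.{0} V] [Fintype V] [∀ a b : V, Fintype (a ⟶ b)]

omit [(a b : V) → Fintype (a ⟶ b)] in
lemma acyclic_wf (hac : ∀ (v : V) (p : Quiver.Path v v), p.length = 0) :
    WellFounded (fun a b : V => ∃ p : Quiver.Path a b, p.length ≠ 0) := by
  have htrans : Transitive (fun a b : V => ∃ p : Quiver.Path a b, p.length ≠ 0) := by
    rintro a b c ⟨p, hp⟩ ⟨q, hq⟩
    exact ⟨p.comp q, by simp [Quiver.Path.length_comp]; omega⟩
  have hirr : ∀ a : V, ¬ (∃ p : Quiver.Path a a, p.length ≠ 0) := by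
    rintro a ⟨p, hp⟩; exact hp (hac a p)
  haveI : IsTrans V (fun a b : V => ∃ p : Quiver.Path a b, p.length ≠ 0) := ⟨htrans⟩
  haveI : IsIrrefl V (fun a b : V => ∃ p : Quiver.Path a b, p.length ≠ 0) := ⟨hirr⟩
  exact Finite.wellFounded_of_trans_of_irrefl _

open Classical in
lemma path_finite (hac : ∀ (v : V) (p : Quiver.Path v v), p.length = 0) (a b : V) :
    Finite (Quiver.Path a b) := by
  refine (acyclic_wf hac).induction (C := fun b => Finite (Quiver.Path a b)) b ?_
  intro b IH
  haveI : ∀ c : V, Finite (Quiver.Path a c × (c ⟶ b)) := by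
    intro c
    by_cases h : Nonempty (c ⟶ b)
    · haveI : Finite (Quiver.Path a c) := IH c ⟨h.some.toPath, by simp [Quiver.Hom.toPath]⟩
      infer_instance
    · haveI : IsEmpty (c ⟶ b) := not_nonempty_iff.mp h
      infer_instance
  set f : Quiver.Path a b → Unit ⊕ (Σ c : V, Quiver.Path a c × (c ⟶ b)) :=
    fun p => if h : ∃ s : Σ c : V, Quiver.Path a c × (c ⟶ b), p = s.2.1.cons s.2.2
      then Sum.inr h.choose else Sum.inl () with hf
  have hinj : Function.Injective f := by
    intro p p' h
    by_cases h1 : ∃ s : Σ c : V, Quiver.Path a c × (c ⟶ b), p = s.2.1.cons s.2.2 <;>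
      by_cases h2 : ∃ s : Σ c : V, Quiver.Path a c × (c ⟶ b), p' = s.2.1.cons s.2.2
    · rw [hf] at h
      simp only [dif_pos h1, dif_pos h2, Sum.inr.injEq] at h
      rw [h1.choose_spec, h2.choose_spec, h]
    · rw [hf] at h
      simp only [dif_pos h1, dif_neg h2] at h
      cases h
    · rw [hf] at h
      simp only [dif_pos h2, dif_neg h1] at h
      cases h
    · cases p with
      | nil =>
        cases p' with
        | nil => rfl
        | cons q' α' => exact absurd ⟨⟨_, q', α'⟩, rfl⟩ h2
      | cons q α => exact absurd ⟨⟨_, q, α⟩, rfl⟩ h1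
  exact Finite.of_injective f hinj
end Finiteness

section FunctorLayer
variable (K : Type) [Field K] {V : Type} [Quiver.{0} V]

lemma naturality_arrows {F G : Paths V ⥤ ModuleCat K} (app : ∀ z : Paths V, F.obj z ⟶ G.obj z)
    (h : ∀ {a b : V} (α : a ⟶ b), F.map α.toPath ≫ app b = app a ≫ G.map α.toPath)
    {a b : Paths V} (f : a ⟶ b) : F.map f ≫ app b = app a ≫ G.map f := by
  refine Paths.induction (fun {a b} f => F.map f ≫ app b = app a ≫ G.map f) ?_ ?_ f
  · intro v; simp
  · intro u v w p q hp
    show F.map (p ≫ (Paths.of V).map q) ≫ app ((Paths.of V).obj w) = app ((Paths.of V).obj u) ≫ G.map (p ≫ (Paths.of V).map q)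
    have h' : F.map ((Paths.of V).map q) ≫ app ((Paths.of V).obj w) = app ((Paths.of V).obj v) ≫ G.map ((Paths.of V).map q) := h q
    rw [Functor.map_comp, Functor.map_comp, Category.assoc, h', ← Category.assoc,
      hp, Category.assoc]

lemma stdProj_map_toPath {x a b : V} (α : a ⟶ b) :
    (stdProj K x).map α.toPath =
      ModuleCat.ofHom (Finsupp.lmapDomain K K (fun p : Quiver.Path x a => p.cons α) :
        (Quiver.Path x a →₀ K) →ₗ[K] (Quiver.Path x b →₀ K)) := by
  simp [stdProj]; rfl

noncomputable def famProj {ι : Type} (t : ι → V) : Paths V ⥤ ModuleCat K :=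
  Paths.lift
    { obj := fun z => ModuleCat.of K ((Σ i : ι, Quiver.Path (t i) z) →₀ K)
      map := fun {a b} α =>
        ModuleCat.ofHom (Finsupp.lmapDomain K K
            (fun s : Σ i : ι, Quiver.Path (t i) a => ⟨s.1, s.2.cons α⟩) :
          ((Σ i : ι, Quiver.Path (t i) a) →₀ K) →ₗ[K] ((Σ i : ι, Quiver.Path (t i) b) →₀ K)) }

lemma famProj_map_toPath {ι : Type} (t : ι → V) {a b : V} (α : a ⟶ b) :
    (famProj K t).map α.toPath =
      ModuleCat.ofHom (Finsupp.lmapDomain K K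
          (fun s : Σ i : ι, Quiver.Path (t i) a => ⟨s.1, s.2.cons α⟩) :
        ((Σ i : ι, Quiver.Path (t i) a) →₀ K) →ₗ[K] ((Σ i : ι, Quiver.Path (t i) b) →₀ K)) := by
  simp [famProj]; rfl

end FunctorLayer

section Bip
variable (K : Type) [Field K] {V : Type} [Quiver.{0} V] {ι : Type} (t : ι → V)

lemma lcomapDomain_apply' {α β : Type} (f : α → β) (hf : Function.Injective f) (l : β →₀ K) :
    Finsupp.lcomapDomain (R := K) (M := K) f hf l = Finsupp.comapDomain f l hf.injOn := rfl

lemma comap_sigma_single_self {β : ι → Type} (i : ι) (s : β i) (m : K) :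
    Finsupp.comapDomain (Sigma.mk i) (Finsupp.single (⟨i, s⟩ : Σ j, β j) m)
      sigma_mk_injective.injOn = Finsupp.single s m :=
  Finsupp.comapDomain_single (Sigma.mk i) s m sigma_mk_injective.injOn

lemma comap_sigma_single_ne {β : ι → Type} {i j : ι} (h : j ≠ i) (s : β j) (m : K) :
    Finsupp.comapDomain (Sigma.mk i) (Finsupp.single (⟨j, s⟩ : Σ j, β j) m)
      sigma_mk_injective.injOn = (0 : β i →₀ K) := by
  ext r
  rw [Finsupp.comapDomain_apply, Finsupp.zero_apply, Finsupp.single_eq_of_ne']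
  exact fun e => h (congrArg Sigma.fst e)

lemma pi_natural (i : ι) {a b : V} (α : a ⟶ b) :
    (Finsupp.lcomapDomain (R := K) (M := K)
        (@Sigma.mk ι (fun j => Quiver.Path (t j) b) i) sigma_mk_injective).comp
      (Finsupp.lmapDomain K K
        (fun s : Σ j : ι, Quiver.Path (t j) a => (⟨s.1, s.2.cons α⟩ : Σ j : ι, Quiver.Path (t j) b)))
    = (Finsupp.lmapDomain K K (fun p : Quiver.Path (t i) a => p.cons α)).comp
      (Finsupp.lcomapDomain (R := K) (M := K)
        (@Sigma.mk ι (fun j => Quiver.Path (t j) a) i) sigma_mk_injective) := by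
  refine Finsupp.lhom_ext fun s m => ?_
  rcases s with ⟨j, r⟩
  simp only [LinearMap.comp_apply, Finsupp.lmapDomain_apply, Finsupp.mapDomain_single,
    lcomapDomain_apply']
  by_cases h : j = i
  · subst h
    rw [comap_sigma_single_self, comap_sigma_single_self, Finsupp.mapDomain_single]
  · rw [comap_sigma_single_ne K h, comap_sigma_single_ne K h, Finsupp.mapDomain_zero]

lemma iota_natural (i : ι) {a b : V} (α : a ⟶ b) :
    (Finsupp.lmapDomain K K
        (fun s : Σ j : ι, Quiver.Path (t j) a => (⟨s.1, s.2.cons α⟩ : Σ j : ι, Quiver.Path (t j) b))).comp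
      (Finsupp.lmapDomain K K (@Sigma.mk ι (fun j => Quiver.Path (t j) a) i))
    = (Finsupp.lmapDomain K K (@Sigma.mk ι (fun j => Quiver.Path (t j) b) i)).comp
      (Finsupp.lmapDomain K K (fun p : Quiver.Path (t i) a => p.cons α)) := by
  refine Finsupp.lhom_ext fun r m => ?_
  simp only [LinearMap.comp_apply, Finsupp.lmapDomain_apply, Finsupp.mapDomain_single]

noncomputable def famProjπ (i : ι) : famProj K t ⟶ stdProj K (t i) where
  app z := ModuleCat.ofHom (Finsupp.lcomapDomain (R := K) (M := K)
    (@Sigma.mk ι (fun j => Quiver.Path (t j) z) i) sigma_mk_injective :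
      ((Σ j : ι, Quiver.Path (t j) z) →₀ K) →ₗ[K] (Quiver.Path (t i) z →₀ K))
  naturality := fun a b f =>
    naturality_arrows K (F := famProj K t) (G := stdProj K (t i))
      (fun z => ModuleCat.ofHom (Finsupp.lcomapDomain (R := K) (M := K)
        (@Sigma.mk ι (fun j => Quiver.Path (t j) z) i) sigma_mk_injective :
          ((Σ j : ι, Quiver.Path (t j) z) →₀ K) →ₗ[K] (Quiver.Path (t i) z →₀ K)))
      (fun {a b} α => by
        rw [stdProj_map_toPath, famProj_map_toPath]
        exact ModuleCat.hom_ext (pi_natural K t i α)) f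

noncomputable def famProjι (i : ι) : stdProj K (t i) ⟶ famProj K t where
  app z := ModuleCat.ofHom (Finsupp.lmapDomain K K (@Sigma.mk ι (fun j => Quiver.Path (t j) z) i) :
      (Quiver.Path (t i) z →₀ K) →ₗ[K] ((Σ j : ι, Quiver.Path (t j) z) →₀ K))
  naturality := fun a b f =>
    naturality_arrows K (F := stdProj K (t i)) (G := famProj K t)
      (fun z => ModuleCat.ofHom (Finsupp.lmapDomain K K (@Sigma.mk ι (fun j => Quiver.Path (t j) z) i) :
          (Quiver.Path (t i) z →₀ K) →ₗ[K] ((Σ j : ι, Quiver.Path (t j) z) →₀ K)))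
      (fun {a b} α => by
        rw [stdProj_map_toPath, famProj_map_toPath]
        exact ModuleCat.hom_ext (iota_natural K t i α).symm) f
end Bip

section Bip2
variable (K : Type) [Field K] {V : Type} [Quiver.{0} V] {ι : Type} [Fintype ι] (t : ι → V)

lemma sum_iota_pi (z : V) :
    (∑ i : ι, (Finsupp.lmapDomain K K (@Sigma.mk ι (fun j => Quiver.Path (t j) z) i)).comp
      (Finsupp.lcomapDomain (R := K) (M := K) (@Sigma.mk ι (fun j => Quiver.Path (t j) z) i)
        sigma_mk_injective))
    = (LinearMap.id : ((Σ j : ι, Quiver.Path (t j) z) →₀ K) →ₗ[K] _) := by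
  classical
  refine Finsupp.lhom_ext fun s m => ?_
  rcases s with ⟨j, r⟩
  rw [LinearMap.sum_apply, LinearMap.id_apply, Finset.sum_eq_single j]
  · simp only [LinearMap.comp_apply, lcomapDomain_apply', comap_sigma_single_self,
      Finsupp.lmapDomain_apply, Finsupp.mapDomain_single]
  · intro i _ hne
    simp only [LinearMap.comp_apply, lcomapDomain_apply', comap_sigma_single_ne K hne.symm,
      map_zero]
  · intro h; exact absurd (Finset.mem_univ j) h

lemma pi_comp_iota_self (i : ι) (z : V) :
    (Finsupp.lcomapDomain (R := K) (M := K) (@Sigma.mk ι (fun j => Quiver.Path (t j) z) i)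
        sigma_mk_injective).comp
      (Finsupp.lmapDomain K K (@Sigma.mk ι (fun j => Quiver.Path (t j) z) i))
    = (LinearMap.id : (Quiver.Path (t i) z →₀ K) →ₗ[K] _) := by
  refine Finsupp.lhom_ext fun r m => ?_
  simp only [LinearMap.comp_apply, Finsupp.lmapDomain_apply, Finsupp.mapDomain_single,
    lcomapDomain_apply', comap_sigma_single_self, LinearMap.id_apply]

lemma pi_comp_iota_ne {i j : ι} (h : i ≠ j) (z : V) :
    (Finsupp.lcomapDomain (R := K) (M := K) (@Sigma.mk ι (fun j => Quiver.Path (t j) z) j)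
        sigma_mk_injective).comp
      (Finsupp.lmapDomain K K (@Sigma.mk ι (fun j => Quiver.Path (t j) z) i))
    = 0 := by
  refine Finsupp.lhom_ext fun r m => ?_
  simp only [LinearMap.comp_apply, Finsupp.lmapDomain_apply, Finsupp.mapDomain_single,
    lcomapDomain_apply', comap_sigma_single_ne K h, LinearMap.zero_apply]

noncomputable def famProjIsoBiproduct : famProj K t ≅ ⨁ fun i : ι => stdProj K (t i) where
  hom := biproduct.lift (famProjπ K t)
  inv := biproduct.desc (famProjι K t)
  hom_inv_id := by
    rw [biproduct.lift_desc]
    apply NatTrans.ext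
    funext z
    rw [NatTrans.app_sum]
    simp only [NatTrans.comp_app, NatTrans.id_app]
    apply ModuleCat.hom_ext
    rw [ModuleCat.hom_sum]
    exact sum_iota_pi K t z
  inv_hom_id := by
    refine biproduct.hom_ext _ _ fun j => ?_
    refine biproduct.hom_ext' _ _ fun i => ?_
    simp only [Category.assoc, biproduct.lift_π, biproduct.ι_desc_assoc, Category.id_comp,
      biproduct.ι_π]
    by_cases h : i = j
    · subst h
      rw [biproduct.ι_π_self]
      apply NatTrans.ext
      funext z
      simp only [NatTrans.comp_app, eqToHom_refl, NatTrans.id_app]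
      exact ModuleCat.hom_ext (pi_comp_iota_self K t i z)
    · rw [biproduct.ι_π_ne _ h]
      apply NatTrans.ext
      funext z
      simp only [NatTrans.comp_app, NatTrans.app_zero]
      exact ModuleCat.hom_ext (pi_comp_iota_ne K t h z)
end Bip2

section TensorIso
variable (K : Type) [Field K] {V : Type} [Quiver.{0} V] {ι : Type} (t : ι → V)

noncomputable def tensorIsoFam (x y : V)
    (Θ : ∀ z : V, (Σ i : ι, Quiver.Path (t i) z) ≃ Quiver.Path x z × Quiver.Path y z)
    (hΘ : ∀ {z z' : V} (α : z ⟶ z') (s : Σ i : ι, Quiver.Path (t i) z),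
      Θ z' ⟨s.1, s.2.cons α⟩ = ((Θ z s).1.cons α, (Θ z s).2.cons α)) :
    (stdProj K x ⊗ stdProj K y) ≅ famProj K t :=
  NatIso.ofComponents
    (fun z => LinearEquiv.toModuleIso
      ((finsuppTensorFinsupp' K (Quiver.Path x z) (Quiver.Path y z)).trans
        (Finsupp.domLCongr (Θ z).symm)))
    (fun {a b} f => by
      refine naturality_arrows K (F := stdProj K x ⊗ stdProj K y) (G := famProj K t)
        (fun z => (ModuleCat.ofHom ((finsuppTensorFinsupp' K (Quiver.Path x z) (Quiver.Path y z)).trans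
          (Finsupp.domLCongr (Θ z).symm)).toLinearMap :
            (stdProj K x ⊗ stdProj K y).obj z ⟶ (famProj K t).obj z))
        (fun {a b} α => ?_) f
      have key : ∀ (p : Quiver.Path x a) (q : Quiver.Path y a),
          (Θ b).symm (p.cons α, q.cons α)
            = (fun s : Σ i : ι, Quiver.Path (t i) a =>
                (⟨s.1, s.2.cons α⟩ : Σ i : ι, Quiver.Path (t i) b)) ((Θ a).symm (p, q)) := by
        intro p q
        apply (Θ b).injective
        rw [Equiv.apply_symm_apply, hΘ, Equiv.apply_symm_apply]
      erw [Monoidal.tensorObj_map, stdProj_map_toPath, stdProj_map_toPath, famProj_map_toPath]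
      apply ModuleCat.hom_ext
      show (((finsuppTensorFinsupp' K (Quiver.Path x b) (Quiver.Path y b)).trans
          (Finsupp.domLCongr (Θ b).symm)).toLinearMap).comp
          (TensorProduct.map (Finsupp.lmapDomain K K (fun p : Quiver.Path x a => p.cons α))
            (Finsupp.lmapDomain K K (fun q : Quiver.Path y a => q.cons α)))
        = (Finsupp.lmapDomain K K (fun s : Σ i : ι, Quiver.Path (t i) a =>
            (⟨s.1, s.2.cons α⟩ : Σ i : ι, Quiver.Path (t i) b))).comp
          (((finsuppTensorFinsupp' K (Quiver.Path x a) (Quiver.Path y a)).trans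
            (Finsupp.domLCongr (Θ a).symm)).toLinearMap)
      ext p q
      simp only [TensorProduct.AlgebraTensorModule.curry_apply, TensorProduct.curry_apply,
        LinearMap.coe_restrictScalars, Finsupp.lsingle_apply, LinearMap.comp_apply,
        TensorProduct.map_tmul, Finsupp.lmapDomain_apply, Finsupp.mapDomain_single,
        LinearEquiv.coe_coe, LinearEquiv.trans_apply,
        finsuppTensorFinsupp'_single_tmul_single, Finsupp.domLCongr_apply,
        Finsupp.domCongr_apply, Finsupp.equivMapDomain_single, key, mul_one]
      )
end TensorIso

section Count
variable {V : Type} [Quiver.{0} V] [Fintype V] [∀ a b : V, Fintype (a ⟶ b)]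

lemma card_eq (hac : ∀ (v : V) (p : Quiver.Path v v), p.length = 0) (x y w : V) :
    Nat.card (Quiver.Path x w) * Nat.card (Quiver.Path y w)
      = Nat.card (Prim x y w)
        + ∑ a : Σ z : V, (z ⟶ w),
            Nat.card (Quiver.Path x a.1) * Nat.card (Quiver.Path y a.1) := by
  haveI : ∀ v : V, Finite (Quiver.Path x v) := path_finite hac x
  haveI : ∀ v : V, Finite (Quiver.Path y v) := path_finite hac y
  haveI : Finite (Prim x y w) := Subtype.finite
  rw [← Nat.card_prod, Nat.card_congr (splitEquiv x y w), Nat.card_sum]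
  congr 1
  haveI : ∀ a : Σ z : V, (z ⟶ w), Fintype (Quiver.Path x a.1 × Quiver.Path y a.1) :=
    fun a => Fintype.ofFinite _
  rw [Nat.card_eq_fintype_card, Fintype.card_sigma]
  exact Finset.sum_congr rfl fun a _ => by rw [← Nat.card_eq_fintype_card, Nat.card_prod]
end Count

/-- Clebsch-Gordan problem for projective representations of a finite
acyclic quiver: `P(x) ⊗ P(y) ≅ ⊕_w P(w)^{⊕ c_w}` where
`c_w = n_{xw} n_{yw} - ∑_{α : z → w} n_{xz} n_{yz}`, and each `c_w` is a nonnegative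
integer. -/
theorem stdProj_tensor_stdProj
    (K : Type) [Field K] (V : Type) [Quiver V] [Fintype V]
    [∀ a b : V, Fintype (a ⟶ b)]
    (hacyclic : ∀ (v : V) (p : Quiver.Path v v), p.length = 0)
    (x y : V) :
    ∃ c : V → ℕ,
      (∀ w : V,
        (c w : ℤ) =
          (Nat.card (Quiver.Path x w) : ℤ) * (Nat.card (Quiver.Path y w) : ℤ) -
            ∑ α : Σ z : V, (z ⟶ w),
              (Nat.card (Quiver.Path x α.1) : ℤ) * (Nat.card (Quiver.Path y α.1) : ℤ)) ∧
      Nonempty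
        ((stdProj K x ⊗ stdProj K y) ≅ ⨁ fun i : Σ w : V, Fin (c w) => stdProj K i.1) := by
  refine ⟨fun w => Nat.card (Prim x y w), fun w => ?_, ⟨?_⟩⟩
  · have h := card_eq hacyclic x y w
    have h2 := congrArg (fun n : ℕ => (n : ℤ)) h
    push_cast at h2
    linarith
  · haveI : ∀ v : V, Finite (Quiver.Path x v) := path_finite hacyclic x
    haveI : ∀ v : V, Finite (Quiver.Path y v) := path_finite hacyclic y
    haveI : ∀ w : V, Finite (Prim x y w) := fun w => Subtype.finite
    exact
      (tensorIsoFam K (fun i : Σ w : V, Fin (Nat.card (Prim x y w)) => i.1) x y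
        (fun z =>
          Equiv.trans
            (⟨fun s => ⟨s.1.1, ((Finite.equivFin (Prim x y s.1.1)).symm s.1.2, s.2)⟩,
              fun s => ⟨⟨s.1, Finite.equivFin (Prim x y s.1) s.2.1⟩, s.2.2⟩,
              fun s => by rcases s with ⟨⟨w, j⟩, r⟩; simp,
              fun s => by rcases s with ⟨w, pr, r⟩; simp⟩ :
                (Σ i : Σ w : V, Fin (Nat.card (Prim x y w)), Quiver.Path i.1 z)
                  ≃ (Σ w : V, Prim x y w × Quiver.Path w z))
            (Equiv.ofBijective (assemble x y z)
              ⟨assemble_injective x y z, assemble_surjective x y z⟩))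
        (fun {z z'} α s => by
          rcases s with ⟨⟨w, j⟩, r⟩
          have key : ∀ (pq : Prim x y w),
              assemble x y z' ⟨w, (pq, r.cons α)⟩
                = ((assemble x y z ⟨w, (pq, r)⟩).1.cons α,
                    (assemble x y z ⟨w, (pq, r)⟩).2.cons α) := fun pq => by
            simp [assemble, Quiver.Path.comp_cons]
          exact key ((Finite.equivFin (Prim x y w)).symm j))).trans
      (famProjIsoBiproduct K (fun i : Σ w : V, Fin (Nat.card (Prim x y w)) => i.1))
end

section
/- Let Q be a finite acyclic quiver and x, y, w vertices of Q. Then Σ_{α ∈ Q₁ with t(α) = w} n_{x,s(α)}·n_{y,s(α)} ≤ n_{x,w}·n_{y,w}. -/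
open Quiver

lemma path_finite_aux
    (V : Type) [Quiver V] [Fintype V] [∀ a b : V, Fintype (a ⟶ b)]
    (hacyclic : ∀ (v : V) (p : Quiver.Path v v), p.length = 0)
    (x : V) : ∀ b : V, Finite (Quiver.Path x b) := by
  have key : ∀ a b : V, Relation.TransGen (fun a b : V => Nonempty (a ⟶ b)) a b →
      ∃ p : Quiver.Path a b, 0 < p.length := by
    intro a b h
    induction h with
    | single h => exact ⟨Quiver.Path.nil.cons h.some, Nat.zero_lt_one⟩
    | tail _ h ih =>
      obtain ⟨p, hp⟩ := ih
      exact ⟨p.cons h.some, Nat.succ_pos _⟩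
  have hirr : IsIrrefl V (Relation.TransGen fun a b : V => Nonempty (a ⟶ b)) := by
    constructor
    intro v hv
    obtain ⟨p, hp⟩ := key v v hv
    simp [hacyclic v p] at hp
  have hwf : WellFounded (fun a b : V => Nonempty (a ⟶ b)) := by
    have := Finite.wellFounded_of_trans_of_irrefl
      (Relation.TransGen fun a b : V => Nonempty (a ⟶ b))
    exact Subrelation.wf (fun h => Relation.TransGen.single h) this
  intro b
  induction b using hwf.induction with
  | _ b ih =>
    have hfib : ∀ z : V, Finite ((z ⟶ b) × Quiver.Path x z) := by
      intro z
      by_cases hz : Nonempty (z ⟶ b)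
      · have := ih z hz
        infer_instance
      · rw [not_nonempty_iff] at hz
        infer_instance
    have hfin : Finite (PLift (b = x) ⊕ Σ z : V, (z ⟶ b) × Quiver.Path x z) :=
      inferInstance
    refine Finite.of_surjective
      (fun s : PLift (b = x) ⊕ Σ z : V, (z ⟶ b) × Quiver.Path x z =>
        match s with
        | Sum.inl h => h.down ▸ Quiver.Path.nil
        | Sum.inr ⟨z, α, q⟩ => q.cons α) ?_
    intro p
    cases p with
    | nil => exact ⟨Sum.inl ⟨rfl⟩, rfl⟩
    | cons q α => exact ⟨Sum.inr ⟨_, α, q⟩, rfl⟩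

/-- For a finite acyclic quiver and vertices `x, y, w`:
`∑_{α ∈ Q₁, t(α) = w} n_{x,s(α)} · n_{y,s(α)} ≤ n_{x,w} · n_{y,w}`,
where `n_{ab}` is the number of paths from `a` to `b`. -/
theorem sum_paths_mul_le
    (V : Type) [Quiver V] [Fintype V] [∀ a b : V, Fintype (a ⟶ b)]
    (hacyclic : ∀ (v : V) (p : Quiver.Path v v), p.length = 0)
    (x y w : V) :
    ∑ α : Σ z : V, (z ⟶ w),
        Nat.card (Quiver.Path x α.1) * Nat.card (Quiver.Path y α.1) ≤
      Nat.card (Quiver.Path x w) * Nat.card (Quiver.Path y w) := by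
  have hfx := path_finite_aux V hacyclic x
  have hfy := path_finite_aux V hacyclic y
  letI : ∀ b : V, Fintype (Quiver.Path x b) := fun b => @Fintype.ofFinite _ (hfx b)
  letI : ∀ b : V, Fintype (Quiver.Path y b) := fun b => @Fintype.ofFinite _ (hfy b)
  simp_rw [Nat.card_eq_fintype_card, ← Fintype.card_prod]
  rw [← Fintype.card_sigma]
  apply Fintype.card_le_of_injective
    (f := fun s : Σ α : Σ z : V, (z ⟶ w), Quiver.Path x α.1 × Quiver.Path y α.1 =>
      (s.2.1.cons s.1.2, s.2.2.cons s.1.2))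
  rintro ⟨⟨z, α⟩, p, q⟩ ⟨⟨z', α'⟩, p', q'⟩ h
  simp only [Prod.mk.injEq] at h
  obtain ⟨h1, h2⟩ := h
  have hz : z = z' := Quiver.Path.obj_eq_of_cons_eq_cons h1
  subst hz
  have hα : α = α' := eq_of_heq (Quiver.Path.hom_heq_of_cons_eq_cons h1)
  have hp : p = p' := eq_of_heq (Quiver.Path.heq_of_cons_eq_cons h1)
  have hq : q = q' := eq_of_heq (Quiver.Path.heq_of_cons_eq_cons h2)
  subst hα; subst hp; subst hq; rfl
end

section
/- Let C be a finite acyclic category. Then there exists a function μ : C₀ × C₀ → ℤ such that μ(x,x) = 1 for every object x, and for all objects x, y one has Σ_{z ∈ C₀} [x,z]·μ(z,y) = (1 if x = y, else 0) and Σ_{z ∈ C₀} μ(x,z)·[z,y] = (1 if x = y, else 0). -/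
open CategoryTheory

lemma det_one_of_blockTriangular {n α : Type} [Fintype n] [DecidableEq n] [LinearOrder α]
    (M : Matrix n n ℤ) (f : n → α) (hf : Function.Injective f)
    (ht : M.BlockTriangular f) (hd : ∀ i, M i i = 1) : M.det = 1 := by
  rw [ht.det]
  apply Finset.prod_eq_one
  intro a ha
  obtain ⟨i, _, hi⟩ := Finset.mem_image.mp ha
  haveI : Unique {k // f k = a} :=
    ⟨⟨⟨i, hi⟩⟩, fun j => Subtype.ext (hf (j.2.trans hi.symm))⟩
  rw [Matrix.det_unique, Matrix.toSquareBlock_def]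
  exact hd _

/-- A finite acyclic category admits a Möbius function: `μ(x,x) = 1` and
`∑_z [x,z]·μ(z,y) = δ_{xy} = ∑_z μ(x,z)·[z,y]`, where `[x,y]` is the number of morphisms
from `x` to `y`. -/
theorem exists_mobius_function
    (C : Type) [Category C] [FinCategory C] [DecidableEq C]
    (hendo : ∀ (x : C) (f : x ⟶ x), f = 𝟙 x)
    (hiso : ∀ x y : C, (x ≅ y) → x = y) :
    ∃ μ : C → C → ℤ,
      (∀ x : C, μ x x = 1) ∧
      (∀ x y : C,
        ∑ z : C, (Fintype.card (x ⟶ z) : ℤ) * μ z y = if x = y then 1 else 0) ∧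
      (∀ x y : C,
        ∑ z : C, μ x z * (Fintype.card (z ⟶ y) : ℤ) = if x = y then 1 else 0) := by
  classical
  -- partial order on C
  letI P : PartialOrder C :=
    { le := fun x y => Nonempty (x ⟶ y)
      le_refl := fun x => ⟨𝟙 x⟩
      le_trans := fun x y z hxy hyz => ⟨hxy.some ≫ hyz.some⟩
      le_antisymm := fun x y hxy hyx =>
        hiso x y ⟨hxy.some, hyx.some, hendo x _, hendo y _⟩ }
  let f : C → LinearExtension C := fun x => (toLinearExtension (α := C)) x
  have hf : Function.Injective f := fun a b h => h
  have hfmono : ∀ {x y : C}, Nonempty (x ⟶ y) → f x ≤ f y := by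
    intro x y h
    exact (toLinearExtension (α := C)).monotone h
  let Z : Matrix C C ℤ := fun x y => (Fintype.card (x ⟶ y) : ℤ)
  have hZdiag : ∀ x : C, Z x x = 1 := by
    intro x
    have : Fintype.card (x ⟶ x) = 1 :=
      Fintype.card_eq_one_iff.mpr ⟨𝟙 x, fun g => hendo x g⟩
    simp [Z, this]
  have hZtri : Z.BlockTriangular f := by
    intro i j hij
    by_contra h
    have : Nonempty (i ⟶ j) := by
      rw [← Fintype.card_pos_iff]
      simp only [Z] at h
      omega
    exact absurd (hfmono this) (not_le.mpr hij)
  have hdet : Z.det = 1 := det_one_of_blockTriangular Z f hf hZtri hZdiag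
  refine ⟨fun x y => Z.adjugate x y, ?_, ?_, ?_⟩
  · intro x
    show Z.adjugate x x = 1
    rw [Matrix.adjugate_apply]
    apply det_one_of_blockTriangular _ f hf
    · intro i j hij
      rcases eq_or_ne i x with h | h
      · have hj : j ≠ x := fun hj => by rw [h, hj] at hij; exact lt_irrefl _ hij
        simp [h, Matrix.updateRow_self, Pi.single_apply, hj]
      · rw [Matrix.updateRow_ne h]
        exact hZtri hij
    · intro i
      rcases eq_or_ne i x with h | h
      · simp [h, Matrix.updateRow_self, Pi.single_apply]
      · rw [Matrix.updateRow_ne h]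
        exact hZdiag i
  · intro x y
    have := congrFun (congrFun (Matrix.mul_adjugate Z) x) y
    rw [hdet, one_smul] at this
    rw [Matrix.mul_apply] at this
    simpa [Matrix.one_apply, Z] using this
  · intro x y
    have := congrFun (congrFun (Matrix.adjugate_mul Z) x) y
    rw [hdet, one_smul] at this
    rw [Matrix.mul_apply] at this
    simpa [Matrix.one_apply, Z] using this
end

section
/- Let Q be a quiver, T a subquiver of Q, t a vertex of T, and (Q', f') a quiver over Q such that every vertex and every arrow in the image of f' belongs to T. Then restriction to vertices is a bijection from the set of morphisms of quivers over Q from (Q', f') to (P_{T,t}, π) onto the set of functions g₀ : Q'₀ → (P_{T,t})₀ satisfying (i) π(g₀(v)) = f'(v) for every vertex v of Q', and (ii) g₀(t(α')) = g₀(s(α'))·f'(α') (the concatenation of the path g₀(s(α')) with the arrow f'(α')) for every arrow α' of Q'. -/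
/-! ## Bundled quivers and quivers over a fixed quiver -/

/-- A (bundled) quiver: a set of vertices, a set of arrows, and source/target maps. -/
structure BQuiv : Type 1 where
  V : Type
  E : Type
  s : E → V
  t : E → V

namespace BQuiv

/-- A morphism of quivers (a "coloring"). -/
@[ext]
structure Hom (A B : BQuiv) where
  onV : A.V → B.V
  onE : A.E → B.E
  hs : ∀ e : A.E, B.s (onE e) = onV (A.s e)
  ht : ∀ e : A.E, B.t (onE e) = onV (A.t e)

/-- Composition of morphisms of quivers. -/
def Hom.comp {A B C : BQuiv} (f : Hom A B) (g : Hom B C) : Hom A C where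
  onV v := g.onV (f.onV v)
  onE e := g.onE (f.onE e)
  hs e := by rw [g.hs, f.hs]
  ht e := by rw [g.ht, f.ht]

/-- `Q.IsPathFrom a b es` : the list of edges `es` forms a path from `a` to `b` in `Q`. -/
def IsPathFrom (Q : BQuiv) : Q.V → Q.V → List Q.E → Prop
  | a, b, [] => a = b
  | a, b, e :: es => Q.s e = a ∧ Q.IsPathFrom (Q.t e) b es

theorem IsPathFrom.snoc {Q : BQuiv} {a b : Q.V} {es : List Q.E}
    (h : Q.IsPathFrom a b es) {e : Q.E} (he : Q.s e = b) :
    Q.IsPathFrom a (Q.t e) (es ++ [e]) := by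
  induction es generalizing a with
  | nil =>
      simp only [IsPathFrom] at h
      subst h
      exact ⟨he, rfl⟩
  | cons f fs ih =>
      obtain ⟨h1, h2⟩ := h
      exact ⟨h1, ih h2⟩

theorem IsPathFrom.append {Q : BQuiv} {a b c : Q.V} {es fs : List Q.E}
    (h : Q.IsPathFrom a b es) (h' : Q.IsPathFrom b c fs) :
    Q.IsPathFrom a c (es ++ fs) := by
  induction es generalizing a with
  | nil =>
      simp only [IsPathFrom] at h
      subst h
      exact h'
  | cons f gs ih =>
      obtain ⟨h1, h2⟩ := h
      exact ⟨h1, ih h2⟩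

/-- `Q` is acyclic if every path from a vertex to itself is trivial. -/
def IsAcyclic (Q : BQuiv) : Prop :=
  ∀ (v : Q.V) (es : List Q.E), Q.IsPathFrom v v es → es = []

/-! ## Subquivers -/

/-- A subquiver of `Q`: a subset of vertices and a subset of arrows with endpoints in it. -/
structure Sub (Q : BQuiv) where
  verts : Set Q.V
  edges : Set Q.E
  src_mem : ∀ e ∈ edges, Q.s e ∈ verts
  tgt_mem : ∀ e ∈ edges, Q.t e ∈ verts

/-- The quiver underlying a subquiver. -/
def Sub.toBQuiv {Q : BQuiv} (T : Sub Q) : BQuiv where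
  V := T.verts
  E := T.edges
  s e := ⟨Q.s e.1, T.src_mem e.1 e.2⟩
  t e := ⟨Q.t e.1, T.tgt_mem e.1 e.2⟩

/-- The inclusion of a subquiver; `E_T` is `(T.toBQuiv, T.incl)` as a quiver over `Q`. -/
def Sub.incl {Q : BQuiv} (T : Sub Q) : Hom T.toBQuiv Q where
  onV := Subtype.val
  onE := Subtype.val
  hs _ := rfl
  ht _ := rfl

/-- `T.IsPathIn a b es` : `es` is a path from `a` to `b` lying entirely in the
subquiver `T`. -/
def Sub.IsPathIn {Q : BQuiv} (T : Sub Q) (a b : Q.V) (es : List Q.E) : Prop :=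
  a ∈ T.verts ∧ Q.IsPathFrom a b es ∧ ∀ e ∈ es, e ∈ T.edges

/-- Intersection of subquivers. -/
def Sub.inter {Q : BQuiv} (S T : Sub Q) : Sub Q where
  verts := S.verts ∩ T.verts
  edges := S.edges ∩ T.edges
  src_mem e he := ⟨S.src_mem e he.1, T.src_mem e he.2⟩
  tgt_mem e he := ⟨S.tgt_mem e he.1, T.tgt_mem e he.2⟩

/-- The full subquiver (all of `Q`). -/
def fullSub (Q : BQuiv) : Sub Q where
  verts := Set.univ
  edges := Set.univ
  src_mem _ _ := trivial
  tgt_mem _ _ := trivial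

/-- `S ⊆ T` for subquivers. -/
def Sub.le {Q : BQuiv} (S T : Sub Q) : Prop :=
  S.verts ⊆ T.verts ∧ S.edges ⊆ T.edges

/-- The successor closure of a vertex `j` in a subquiver `U`: the vertices of `U`
reachable from `j` by a path in `U`, together with all arrows of `U` between them. -/
def succClosure {Q : BQuiv} (U : Sub Q) (j : Q.V) : Sub Q where
  verts := {v | ∃ es, U.IsPathIn j v es}
  edges := {e | e ∈ U.edges ∧ (∃ es, U.IsPathIn j (Q.s e) es) ∧ ∃ es, U.IsPathIn j (Q.t e) es}
  src_mem _ he := he.2.1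
  tgt_mem _ he := he.2.2

/-- `s₀` is the unique source of the subquiver `S`. -/
def Sub.IsUniqueSource {Q : BQuiv} (S : Sub Q) (s₀ : Q.V) : Prop :=
  s₀ ∈ S.verts ∧ (∀ e ∈ S.edges, Q.t e ≠ s₀) ∧
    ∀ v ∈ S.verts, (∀ e ∈ S.edges, Q.t e ≠ v) → v = s₀

/-- `u₀` is the unique sink of the subquiver `S`. -/
def Sub.IsUniqueSink {Q : BQuiv} (S : Sub Q) (u₀ : Q.V) : Prop :=
  u₀ ∈ S.verts ∧ (∀ e ∈ S.edges, Q.s e ≠ u₀) ∧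
    ∀ v ∈ S.verts, (∀ e ∈ S.edges, Q.s e ≠ v) → v = u₀

/-! ## Path and copath quivers -/

/-- The path quiver `P_{T,t}`: vertices are the paths in `T` starting at `t` (recorded as
a pair (endpoint, list of edges)); there is one arrow `p ⟶ p·α` for each path-vertex `p`
and each arrow `α` of `T` starting at the endpoint of `p`. -/
def PathQ {Q : BQuiv} (T : Sub Q) (t : Q.V) : BQuiv where
  V := {x : Q.V × List Q.E // T.IsPathIn t x.1 x.2}
  E := {y : (Q.V × List Q.E) × Q.E //
        T.IsPathIn t y.1.1 y.1.2 ∧ y.2 ∈ T.edges ∧ Q.s y.2 = y.1.1}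
  s y := ⟨y.1.1, y.2.1⟩
  t y := ⟨(Q.t y.1.2, y.1.1.2 ++ [y.1.2]),
    ⟨y.2.1.1, (y.2.1.2.1).snoc y.2.2.2, by
      intro e he
      rcases List.mem_append.1 he with h | h
      · exact y.2.1.2.2 e h
      · rw [List.mem_singleton.1 h]; exact y.2.2.1⟩⟩

/-- The structure map of the path quiver `P_{T,t}` as a quiver over `Q`: a path is sent
to its terminal vertex, and the arrow `(p, α)` to `α`. -/
def pathPi {Q : BQuiv} (T : Sub Q) (t : Q.V) : Hom (PathQ T t) Q where
  onV p := p.1.1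
  onE y := y.1.2
  hs y := y.2.2.2
  ht _ := rfl

/-- The copath quiver `I_{T,u}`: vertices are the paths in `T` ending at `u` (recorded as
a pair (starting vertex, list of edges)); there is one arrow `α·q ⟶ q` for each vertex `q`
and each arrow `α` of `T` ending at the starting vertex of `q`. -/
def CoPathQ {Q : BQuiv} (T : Sub Q) (u : Q.V) : BQuiv where
  V := {x : Q.V × List Q.E // T.IsPathIn x.1 u x.2}
  E := {y : Q.E × (Q.V × List Q.E) //
        T.IsPathIn y.2.1 u y.2.2 ∧ y.1 ∈ T.edges ∧ Q.t y.1 = y.2.1}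
  s y := ⟨(Q.s y.1.1, y.1.1 :: y.1.2.2),
    ⟨T.src_mem _ y.2.2.1, ⟨rfl, by rw [y.2.2.2]; exact y.2.1.2.1⟩, by
      intro e he
      rcases List.mem_cons.1 he with h | h
      · rw [h]; exact y.2.2.1
      · exact y.2.1.2.2 e h⟩⟩
  t y := ⟨y.1.2, y.2.1⟩

/-- The structure map of the copath quiver `I_{T,u}` as a quiver over `Q`: a path is sent
to its starting vertex, and the arrow `(α, q)` to `α`. -/
def coPathPi {Q : BQuiv} (T : Sub Q) (u : Q.V) : Hom (CoPathQ T u) Q where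
  onV p := p.1.1
  onE y := y.1.1
  hs _ := rfl
  ht y := y.2.2.2

/-! ## Fiber products -/

/-- The fiber product of two quivers over `Q`. -/
def Fib {Q Q' Q'' : BQuiv} (f' : Hom Q' Q) (f'' : Hom Q'' Q) : BQuiv where
  V := {p : Q'.V × Q''.V // f'.onV p.1 = f''.onV p.2}
  E := {e : Q'.E × Q''.E // f'.onE e.1 = f''.onE e.2}
  s e := ⟨(Q'.s e.1.1, Q''.s e.1.2), by rw [← f'.hs, ← f''.hs, e.2]⟩
  t e := ⟨(Q'.t e.1.1, Q''.t e.1.2), by rw [← f'.ht, ← f''.ht, e.2]⟩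

/-- The structure map of the fiber product as a quiver over `Q`. -/
def fibHom {Q Q' Q'' : BQuiv} (f' : Hom Q' Q) (f'' : Hom Q'' Q) : Hom (Fib f' f'') Q where
  onV p := f'.onV p.1.1
  onE e := f'.onE e.1.1
  hs e := f'.hs e.1.1
  ht e := f'.ht e.1.1

/-! ## Connected components -/

/-- Adjacency in the underlying undirected graph. -/
def Adj (X : BQuiv) (v w : X.V) : Prop :=
  ∃ e : X.E, (X.s e = v ∧ X.t e = w) ∨ (X.s e = w ∧ X.t e = v)

/-- Connectivity in the underlying undirected graph. -/
def Conn (X : BQuiv) : X.V → X.V → Prop :=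
  Relation.ReflTransGen (Adj X)

/-- The connected component of the vertex `v₀` in `X`, as a quiver. -/
def Component (X : BQuiv) (v₀ : X.V) : BQuiv where
  V := {v : X.V // Conn X v₀ v}
  E := {e : X.E // Conn X v₀ (X.s e)}
  s e := ⟨X.s e.1, e.2⟩
  t e := ⟨X.t e.1, e.2.tail ⟨e.1, Or.inl ⟨rfl, rfl⟩⟩⟩

/-- The inclusion of a connected component. -/
def Component.incl (X : BQuiv) (v₀ : X.V) : Hom (Component X v₀) X where
  onV := Subtype.val
  onE := Subtype.val
  hs _ := rfl
  ht _ := rfl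

/-- A connected component of a quiver over `Q`, regarded as a quiver over `Q` via the
restricted structure map. -/
def componentHom {X Q : BQuiv} (h : Hom X Q) (v₀ : X.V) : Hom (Component X v₀) Q :=
  (Component.incl X v₀).comp h

/-! ## Isomorphisms over `Q` and wrappings -/

/-- An isomorphism of quivers over `Q`: a morphism of quivers commuting with the
structure maps which is bijective on vertices and on arrows. -/
structure OverIso {A B Q : BQuiv} (f : Hom A Q) (g : Hom B Q) where
  hom : Hom A B
  comm : hom.comp g = f
  bijV : Function.Bijective hom.onV
  bijE : Function.Bijective hom.onE

/-- A morphism of quivers is a wrapping if it is injective on parallel arrows. -/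
def IsWrapping {A B : BQuiv} (f : Hom A B) : Prop :=
  ∀ e₁ e₂ : A.E, A.s e₁ = A.s e₂ → A.t e₁ = A.t e₂ → f.onE e₁ = f.onE e₂ → e₁ = e₂

/-! ## Linear quivers tracing a path -/

/-- The linear quiver with vertices `0, 1, …, n` and one arrow `k-1 ⟶ k` for `1 ≤ k ≤ n`. -/
def LinQ (n : ℕ) : BQuiv where
  V := Fin (n + 1)
  E := Fin n
  s := Fin.castSucc
  t := Fin.succ

/-- The vertex reached after `k` steps along a list of edges starting at `a`. -/
def vertAt (Q : BQuiv) : Q.V → List Q.E → ℕ → Q.V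
  | a, _, 0 => a
  | a, [], _ + 1 => a
  | _, e :: es, k + 1 => vertAt Q (Q.t e) es k

theorem vertAt_s {Q : BQuiv} {a b : Q.V} {es : List Q.E} (h : Q.IsPathFrom a b es)
    (k : Fin es.length) : Q.s (es.get k) = vertAt Q a es k.1 := by
  induction es generalizing a with
  | nil => exact absurd k.2 (by simp)
  | cons e es ih =>
      obtain ⟨h1, h2⟩ := h
      rcases k with ⟨k, hk⟩
      cases k with
      | zero => exact h1
      | succ k => exact ih h2 ⟨k, Nat.lt_of_succ_lt_succ hk⟩

theorem vertAt_t {Q : BQuiv} {a b : Q.V} {es : List Q.E} (h : Q.IsPathFrom a b es)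
    (k : Fin es.length) : Q.t (es.get k) = vertAt Q a es (k.1 + 1) := by
  induction es generalizing a with
  | nil => exact absurd k.2 (by simp)
  | cons e es ih =>
      obtain ⟨h1, h2⟩ := h
      rcases k with ⟨k, hk⟩
      cases k with
      | zero =>
          cases es with
          | nil => rfl
          | cons f fs => exact (vertAt_s h2 ⟨0, by simp⟩) ▸ (h2.1).symm ▸ rfl
      | succ k => exact ih h2 ⟨k, Nat.lt_of_succ_lt_succ hk⟩

/-- The linear quiver of length `es.length` tracing the path `es` from `a` to `b`,
as a quiver over `Q`. -/
def traceHom (Q : BQuiv) (a b : Q.V) (es : List Q.E) (h : Q.IsPathFrom a b es) :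
    Hom (LinQ es.length) Q where
  onV k := vertAt Q a es k.1
  onE k := es.get k
  hs k := vertAt_s h k
  ht k := vertAt_t h k

end BQuiv

open BQuiv

/-- For a quiver `(Q', f')` over `Q` whose image lies in the subquiver
`T`, restriction to vertices is a bijection from the set of morphisms of quivers over `Q`
from `(Q', f')` to `(P_{T,t}, π)` onto the set of vertex functions `g₀` satisfying
(i) `π(g₀ v) = f' v` and (ii) `g₀(t(α')) = g₀(s(α'))·f'(α')`. -/
theorem hom_to_pathQuiver_vertex_bijection
    (Q Q' : BQuiv) (f' : Hom Q' Q) (T : Sub Q) (t : Q.V) (ht : t ∈ T.verts)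
    (himgV : ∀ v : Q'.V, f'.onV v ∈ T.verts)
    (himgE : ∀ e : Q'.E, f'.onE e ∈ T.edges) :
    Function.Injective
      (fun g : {g : Hom Q' (PathQ T t) // g.comp (pathPi T t) = f'} => g.1.onV) ∧
    Set.range
      (fun g : {g : Hom Q' (PathQ T t) // g.comp (pathPi T t) = f'} => g.1.onV) =
      {g₀ : Q'.V → (PathQ T t).V |
        (∀ v : Q'.V, (g₀ v).1.1 = f'.onV v) ∧
        ∀ e : Q'.E,
          (g₀ (Q'.t e)).1 = (Q.t (f'.onE e), (g₀ (Q'.s e)).1.2 ++ [f'.onE e])} := by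
  have key : ∀ (g : Hom Q' (PathQ T t)), g.comp (pathPi T t) = f' →
      ∀ e : Q'.E, (g.onE e).1 = ((g.onV (Q'.s e)).1, f'.onE e) := by
    intro g hg e
    have h1 : (g.onE e).1.2 = f'.onE e := congrFun (congrArg Hom.onE hg) e
    have h2 : (g.onE e).1.1 = (g.onV (Q'.s e)).1 :=
      congrArg Subtype.val (g.hs e)
    exact Prod.ext h2 h1
  constructor
  · rintro ⟨g, hg⟩ ⟨g', hg'⟩ h
    simp only at h
    apply Subtype.ext
    ext e
    · exact congrFun h _
    · apply Subtype.ext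
      rw [key g hg e, key g' hg' e, h]
  · ext g₀
    constructor
    · rintro ⟨⟨g, hg⟩, rfl⟩
      refine ⟨fun v => ?_, fun e => ?_⟩
      · exact congrFun (congrArg Hom.onV hg) v
      · have := congrArg Subtype.val (g.ht e)
        simp only [PathQ] at this
        rw [← this, key g hg e]
    · rintro ⟨h1, h2⟩
      have hsrc : ∀ e : Q'.E, Q.s (f'.onE e) = (g₀ (Q'.s e)).1.1 := by
        intro e; rw [f'.hs, h1]
      refine ⟨⟨{ onV := g₀
                 onE := fun e => ⟨((g₀ (Q'.s e)).1, f'.onE e),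
                   (g₀ (Q'.s e)).2, himgE e, hsrc e⟩
                 hs := fun e => Subtype.ext rfl
                 ht := fun e => Subtype.ext (h2 e).symm }, ?_⟩, rfl⟩
      ext v
      · exact h1 v
      · rfl
end

section
/- Let Q be a quiver, T a subquiver of Q, t a vertex of T, and (Q', f') a quiver over Q where Q' is finite and acyclic and has a unique source i' (i.e. i' is the only vertex of Q' with no incoming arrows). Then any two morphisms g, h of quivers over Q from (Q', f') to (P_{T,t}, π) with g(i') = h(i') are equal. -/
open BQuiv

/-- If `Q'` is finite and acyclic with a unique source `i'`, then a
morphism of quivers over `Q` from `(Q', f')` to `(P_{T,t}, π)` is determined by its value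
at `i'`. -/
theorem hom_to_pathQuiver_determined_by_source
    (Q Q' : BQuiv) [Fintype Q'.V] [Fintype Q'.E] (hacyc : Q'.IsAcyclic)
    (f' : Hom Q' Q) (T : Sub Q) (t : Q.V) (ht : t ∈ T.verts)
    (i' : Q'.V)
    (hsrc : ∀ e : Q'.E, Q'.t e ≠ i')
    (huniq : ∀ v : Q'.V, (∀ e : Q'.E, Q'.t e ≠ v) → v = i')
    (g h : Hom Q' (PathQ T t))
    (hg : g.comp (pathPi T t) = f') (hh : h.comp (pathPi T t) = f')
    (heq : g.onV i' = h.onV i') :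
    g = h := by
  -- The edge relation on vertices of `Q'`.
  set R : Q'.V → Q'.V → Prop := fun u v => ∃ e : Q'.E, Q'.s e = u ∧ Q'.t e = v with hRdef
  -- A transitive chain of `R` gives a nonempty path.
  have chain : ∀ {u v : Q'.V}, Relation.TransGen R u v →
      ∃ es : List Q'.E, es ≠ [] ∧ Q'.IsPathFrom u v es := by
    intro u v hc
    induction hc with
    | single hr =>
        obtain ⟨e, he1, he2⟩ := hr
        exact ⟨[e], by simp, ⟨he1, he2⟩⟩
    | tail _ hr ih =>
        obtain ⟨es, hne, hp⟩ := ih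
        obtain ⟨e, he1, he2⟩ := hr
        exact ⟨es ++ [e], by simp, he2 ▸ hp.snoc he1⟩
  haveI : IsTrans Q'.V (Relation.TransGen R) := inferInstance
  haveI : IsIrrefl Q'.V (Relation.TransGen R) := ⟨by
    intro v hv
    obtain ⟨es, hne, hp⟩ := chain hv
    exact hne (hacyc v es hp)⟩
  haveI : Finite Q'.V := Finite.of_fintype _
  have wfT : WellFounded (Relation.TransGen R) :=
    Finite.wellFounded_of_trans_of_irrefl _
  have wfR : WellFounded R :=
    Subrelation.wf (fun hr => Relation.TransGen.single hr) wfT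
  -- Edges are determined by the vertex value at their source.
  have edge_ext : ∀ e : Q'.E, g.onV (Q'.s e) = h.onV (Q'.s e) → g.onE e = h.onE e := by
    intro e hv
    apply Subtype.ext
    apply Prod.ext
    · have h1 : (g.onE e).1.1 = ((PathQ T t).s (g.onE e)).1 := rfl
      have h2 : (h.onE e).1.1 = ((PathQ T t).s (h.onE e)).1 := rfl
      rw [h1, h2, g.hs e, h.hs e, hv]
    · have h1 : (g.onE e).1.2 = (g.comp (pathPi T t)).onE e := rfl
      have h2 : (h.onE e).1.2 = (h.comp (pathPi T t)).onE e := rfl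
      rw [h1, h2, hg, hh]
  -- Vertex values agree, by well-founded induction.
  have key : ∀ v : Q'.V, g.onV v = h.onV v := by
    intro v
    induction v using wfR.induction with
    | _ v ih =>
      by_cases hvi : v = i'
      · rw [hvi]; exact heq
      · have : ¬ ∀ e : Q'.E, Q'.t e ≠ v := fun hall => hvi (huniq v hall)
        push_neg at this
        obtain ⟨e, he⟩ := this
        have hs : g.onV (Q'.s e) = h.onV (Q'.s e) := ih _ ⟨e, rfl, he⟩
        calc g.onV v = (PathQ T t).t (g.onE e) := by rw [← he, g.ht e]
          _ = (PathQ T t).t (h.onE e) := by rw [edge_ext e hs]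
          _ = h.onV v := by rw [h.ht e, he]
  ext
  · exact key _
  · exact edge_ext _ (key _)
end

section
/- Let Q be a finite acyclic quiver and S, T subquivers of Q such that S has a unique source s₀ and every vertex of S is the terminal vertex of a path in S starting at s₀, and T has a unique source t₀. Then the number of morphisms of quivers over Q from P_S = (P_{S,s₀}, π_S) to P_T = (P_{T,t₀}, π_T) equals the number of paths in T from t₀ to s₀ if S ⊆ T, and equals 0 otherwise. -/
open BQuiv

theorem BQuiv.IsPathFrom.unsnoc {Q : BQuiv} {a b : Q.V} {e : Q.E} {es : List Q.E}
    (h : Q.IsPathFrom a b (es ++ [e])) : Q.IsPathFrom a (Q.s e) es ∧ Q.t e = b := by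
  induction es generalizing a with
  | nil => exact ⟨h.1.symm, h.2⟩
  | cons f fs ih => exact ⟨⟨h.1, (ih h.2).1⟩, (ih h.2).2⟩

theorem BQuiv.Sub.IsPathIn.end_mem {Q : BQuiv} {T : Sub Q} {a b : Q.V} {es : List Q.E}
    (h : T.IsPathIn a b es) : b ∈ T.verts := by
  induction es generalizing a with
  | nil => exact h.2.1 ▸ h.1
  | cons e es ih =>
      exact ih ⟨T.tgt_mem e (h.2.2 e (List.mem_cons_self (a := e) (l := es))), h.2.1.2,
        fun f hf => h.2.2 f (List.mem_cons_of_mem _ hf)⟩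

/-- The hom `P_S → P_T` over `Q` determined by prepending a fixed path `q₀` from `t₀` to
`s₀` in `T`. -/
def BQuiv.mkHom {Q : BQuiv} {S T : Sub Q} {s₀ t₀ : Q.V} (hST : S.le T)
    (q₀ : List Q.E) (hq₀ : T.IsPathIn t₀ s₀ q₀) :
    Hom (PathQ S s₀) (PathQ T t₀) where
  onV p := ⟨(p.1.1, q₀ ++ p.1.2), hq₀.1, hq₀.2.1.append p.2.2.1, fun e he =>
    (List.mem_append.1 he).elim (hq₀.2.2 e) (fun h => hST.2 (p.2.2.2 e h))⟩
  onE y := ⟨((y.1.1.1, q₀ ++ y.1.1.2), y.1.2),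
    ⟨hq₀.1, hq₀.2.1.append y.2.1.2.1, fun e he =>
      (List.mem_append.1 he).elim (hq₀.2.2 e) (fun h => hST.2 (y.2.1.2.2 e h))⟩,
    hST.2 y.2.2.1, y.2.2.2⟩
  hs y := rfl
  ht y := Subtype.ext (Prod.ext rfl (List.append_assoc q₀ y.1.1.2 [y.1.2]))

theorem BQuiv.onV_char {Q : BQuiv} {S T : Sub Q} {s₀ t₀ : Q.V}
    (g : Hom (PathQ S s₀) (PathQ T t₀))
    (hg : g.comp (pathPi T t₀) = pathPi S s₀) (hs₀ : s₀ ∈ S.verts) :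
    ∀ (es : List Q.E) (v : Q.V) (h : S.IsPathIn s₀ v es),
      (g.onV ⟨(v, es), h⟩).1 =
        (v, (g.onV ⟨(s₀, []), ⟨hs₀, rfl, by simp⟩⟩).1.2 ++ es) := by
  have hgV : ∀ p : (PathQ S s₀).V, (g.onV p).1.1 = p.1.1 :=
    fun p => congrFun (congrArg Hom.onV hg) p
  have hgE : ∀ y : (PathQ S s₀).E, (g.onE y).1.2 = y.1.2 :=
    fun y => congrFun (congrArg Hom.onE hg) y
  intro es
  induction es using List.reverseRecOn with
  | nil =>
      intro v h
      have hv : s₀ = v := h.2.1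
      subst hv
      rw [List.append_nil]
      exact Prod.ext (hgV _) rfl
  | append_singleton es α ih =>
      intro v h
      obtain ⟨h1, h2⟩ := h.2.1.unsnoc
      have hα : α ∈ S.edges := h.2.2 α (by simp)
      have hp' : S.IsPathIn s₀ (Q.s α) es :=
        ⟨h.1, h1, fun e he => h.2.2 e (by simp [he])⟩
      let y : (PathQ S s₀).E := ⟨((Q.s α, es), α), hp', hα, rfl⟩
      have hsy : (g.onE y).1.1 = (Q.s α, (g.onV ⟨(s₀, []), ⟨hs₀, rfl, by simp⟩⟩).1.2 ++ es) := by
        have := congrArg Subtype.val (g.hs y)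
        exact this.trans (ih (Q.s α) hp')
      have hty := g.ht y
      have htgt : (PathQ S s₀).t y = ⟨(v, es ++ [α]), h⟩ := Subtype.ext (Prod.ext h2 rfl)
      rw [htgt] at hty
      have hval := congrArg Subtype.val hty
      rw [← hval]
      show (Q.t (g.onE y).1.2, (g.onE y).1.1.2 ++ [(g.onE y).1.2]) = _
      rw [hgE y, congrArg Prod.snd hsy]
      exact Prod.ext h2 (List.append_assoc _ _ _)

/-- For subquivers `S, T` of a finite acyclic quiver `Q`, where `S` has a
unique source `s₀` reaching every vertex of `S` and `T` has a unique source `t₀`, the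
number of morphisms of quivers over `Q` from `P_S` to `P_T` is the number of paths in `T`
from `t₀` to `s₀` if `S ⊆ T`, and `0` otherwise. -/
theorem card_hom_pathQuiver_to_pathQuiver
    (Q : BQuiv) [Fintype Q.V] [Fintype Q.E] (hQ : Q.IsAcyclic)
    (S T : Sub Q) (s₀ t₀ : Q.V)
    (hS : S.IsUniqueSource s₀)
    (hreach : ∀ v ∈ S.verts, ∃ es, S.IsPathIn s₀ v es)
    (hT : T.IsUniqueSource t₀) :
    (S.le T →
      Nat.card {g : Hom (PathQ S s₀) (PathQ T t₀) // g.comp (pathPi T t₀) = pathPi S s₀} =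
        Nat.card {es : List Q.E // T.IsPathIn t₀ s₀ es}) ∧
    (¬ S.le T →
      Nat.card {g : Hom (PathQ S s₀) (PathQ T t₀) // g.comp (pathPi T t₀) = pathPi S s₀} =
        0) := by
  have hgV : ∀ (g : Hom (PathQ S s₀) (PathQ T t₀)),
      g.comp (pathPi T t₀) = pathPi S s₀ → ∀ p : (PathQ S s₀).V, (g.onV p).1.1 = p.1.1 :=
    fun g hg p => congrFun (congrArg Hom.onV hg) p
  have hgE : ∀ (g : Hom (PathQ S s₀) (PathQ T t₀)),
      g.comp (pathPi T t₀) = pathPi S s₀ → ∀ y : (PathQ S s₀).E, (g.onE y).1.2 = y.1.2 :=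
    fun g hg y => congrFun (congrArg Hom.onE hg) y
  have hp₀ : S.IsPathIn s₀ s₀ [] := ⟨hS.1, rfl, by simp⟩
  constructor
  · intro hST
    let F : {es : List Q.E // T.IsPathIn t₀ s₀ es} →
        {g : Hom (PathQ S s₀) (PathQ T t₀) // g.comp (pathPi T t₀) = pathPi S s₀} :=
      fun q => ⟨mkHom hST q.1 q.2, rfl⟩
    refine (Nat.card_eq_of_bijective F ⟨?_, ?_⟩).symm
    · intro q q' hqq
      have h2 : q.1 ++ ([] : List Q.E) = q'.1 ++ [] :=
        congrArg (fun g : {g : Hom (PathQ S s₀) (PathQ T t₀) //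
          g.comp (pathPi T t₀) = pathPi S s₀} => (g.1.onV ⟨(s₀, []), hp₀⟩).1.2) hqq
      exact Subtype.ext (by simpa using h2)
    · rintro ⟨g, hg⟩
      have hq₀ := (g.onV ⟨(s₀, []), hp₀⟩).2
      rw [hgV g hg ⟨(s₀, []), hp₀⟩] at hq₀
      refine ⟨⟨(g.onV ⟨(s₀, []), hp₀⟩).1.2, hq₀⟩, ?_⟩
      apply Subtype.ext
      have honV : ∀ p : (PathQ S s₀).V, (mkHom hST _ hq₀).onV p = g.onV p := by
        rintro ⟨⟨v, es⟩, h⟩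
        exact Subtype.ext (onV_char g hg hS.1 es v h).symm
      have honE : ∀ y : (PathQ S s₀).E, (mkHom hST _ hq₀).onE y = g.onE y := by
        rintro ⟨⟨⟨v, es⟩, α⟩, hy⟩
        refine Subtype.ext ?_
        refine (Prod.ext ?_ (hgE g hg ⟨((v, es), α), hy⟩).symm)
        have := congrArg Subtype.val (g.hs ⟨((v, es), α), hy⟩)
        exact (this.trans (onV_char g hg hS.1 es v hy.1)).symm
      exact Hom.ext (funext honV) (funext honE)
  · intro hnST
    have hE : IsEmpty
        {g : Hom (PathQ S s₀) (PathQ T t₀) // g.comp (pathPi T t₀) = pathPi S s₀} := by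
      refine ⟨fun ⟨g, hg⟩ => hnST ⟨?_, ?_⟩⟩
      · intro v hv
        obtain ⟨es, hes⟩ := hreach v hv
        have := (g.onV ⟨(v, es), hes⟩).2.end_mem
        rwa [hgV g hg ⟨(v, es), hes⟩] at this
      · intro e he
        obtain ⟨es, hes⟩ := hreach _ (S.src_mem e he)
        have := (g.onE ⟨((Q.s e, es), e), hes, he, rfl⟩).2.2.1
        rwa [hgE g hg ⟨((Q.s e, es), e), hes, he, rfl⟩] at this
    exact Nat.card_of_isEmpty
end

section
/- Let Q be a finite acyclic quiver and S, T subquivers of Q such that S has a unique sink u₀ and every vertex of S is the starting vertex of a path in S ending at u₀, and T has a unique sink v₀. Then the number of morphisms of quivers over Q from I_S = (I_{S,u₀}, π_S) to I_T = (I_{T,v₀}, π_T) equals the number of paths in T from u₀ to v₀ if S ⊆ T, and equals 0 otherwise. -/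
open BQuiv

section AuxCoPath

variable {Q : BQuiv} {S T : Sub Q} {u₀ v₀ : Q.V}

/-- A morphism over `Q` is forced on vertices: it appends the image of the empty path. -/
theorem onV_forced (h0 : S.IsPathIn u₀ u₀ [])
    (g : Hom (CoPathQ S u₀) (CoPathQ T v₀))
    (hgV : ∀ x, (g.onV x).1.1 = x.1.1) (hgE : ∀ y, (g.onE y).1.1 = y.1.1)
    (es : List Q.E) : ∀ (a : Q.V) (hx : S.IsPathIn a u₀ es),
    (g.onV ⟨(a, es), hx⟩).1 = (a, es ++ (g.onV ⟨(u₀, []), h0⟩).1.2) := by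
  induction es with
  | nil =>
      intro a hx
      have ha : a = u₀ := hx.2.1
      have hv : (⟨(a, []), hx⟩ : (CoPathQ S u₀).V) = ⟨(u₀, []), h0⟩ :=
        Subtype.ext (Prod.ext ha rfl)
      rw [hv, ha]
      exact Prod.ext (hgV _) rfl
  | cons α es ih =>
      intro a hx
      have hsα : Q.s α = a := hx.2.1.1
      have hαS : α ∈ S.edges := hx.2.2 α List.mem_cons_self
      have hx' : S.IsPathIn (Q.t α) u₀ es :=
        ⟨S.tgt_mem α hαS, hx.2.1.2, fun e he => hx.2.2 e (List.mem_cons_of_mem _ he)⟩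
      let y : (CoPathQ S u₀).E := ⟨(α, (Q.t α, es)), hx', hαS, rfl⟩
      have h1 := g.hs y
      have h2 := g.ht y
      have hz1 : (g.onE y).1.1 = α := hgE y
      have hz2 : (g.onE y).1.2 = (Q.t α, es ++ (g.onV ⟨(u₀, []), h0⟩).1.2) := by
        have h2' := congrArg Subtype.val h2
        exact h2'.trans (ih (Q.t α) hx')
      have hsy : (CoPathQ S u₀).s y = ⟨(a, α :: es), hx⟩ :=
        Subtype.ext (Prod.ext hsα rfl)
      rw [hsy] at h1
      have h1' := congrArg Subtype.val h1
      rw [← h1']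
      show (Q.s (g.onE y).1.1, (g.onE y).1.1 :: (g.onE y).1.2.2) = _
      rw [hz1, hz2, hsα]
      rfl

theorem le_of_hom (hreach : ∀ v ∈ S.verts, ∃ es, S.IsPathIn v u₀ es)
    (g : Hom (CoPathQ S u₀) (CoPathQ T v₀))
    (hgV : ∀ x, (g.onV x).1.1 = x.1.1) (hgE : ∀ y, (g.onE y).1.1 = y.1.1) :
    S.le T := by
  constructor
  · intro v hv
    obtain ⟨es, hes⟩ := hreach v hv
    have h := (g.onV ⟨(v, es), hes⟩).2.1
    erw [hgV] at h; exact h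
  · intro e he
    obtain ⟨es, hes⟩ := hreach (Q.t e) (S.tgt_mem e he)
    let y : (CoPathQ S u₀).E := ⟨(e, (Q.t e, es)), hes, he, rfl⟩
    have h := (g.onE y).2.2.1
    rwa [hgE] at h

/-- The morphism over `Q` given by appending a fixed path `p` from `u₀` to `v₀`. -/
def toHom (hle : S.le T) (p : List Q.E) (hp : T.IsPathIn u₀ v₀ p) :
    Hom (CoPathQ S u₀) (CoPathQ T v₀) where
  onV x := ⟨(x.1.1, x.1.2 ++ p),
    hle.1 x.2.1, x.2.2.1.append hp.2.1,
    fun e he => (List.mem_append.1 he).elim (fun h => hle.2 (x.2.2.2 e h)) (hp.2.2 e)⟩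
  onE y := ⟨(y.1.1, (y.1.2.1, y.1.2.2 ++ p)),
    ⟨hle.1 y.2.1.1, y.2.1.2.1.append hp.2.1,
      fun e he => (List.mem_append.1 he).elim (fun h => hle.2 (y.2.1.2.2 e h)) (hp.2.2 e)⟩,
    hle.2 y.2.2.1, y.2.2.2⟩
  hs y := rfl
  ht y := rfl

theorem toHom_comm (hle : S.le T) (p : List Q.E) (hp : T.IsPathIn u₀ v₀ p) :
    (toHom hle p hp).comp (coPathPi T v₀) = coPathPi S u₀ := rfl

end AuxCoPath

/-- For subquivers `S, T` of a finite acyclic quiver `Q`, where `S` has a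
unique sink `u₀` reached from every vertex of `S` and `T` has a unique sink `v₀`, the
number of morphisms of quivers over `Q` from `I_S` to `I_T` is the number of paths in `T`
from `u₀` to `v₀` if `S ⊆ T`, and `0` otherwise. -/
theorem card_hom_copathQuiver_to_copathQuiver
    (Q : BQuiv) [Fintype Q.V] [Fintype Q.E] (hQ : Q.IsAcyclic)
    (S T : Sub Q) (u₀ v₀ : Q.V)
    (hS : S.IsUniqueSink u₀)
    (hreach : ∀ v ∈ S.verts, ∃ es, S.IsPathIn v u₀ es)
    (hT : T.IsUniqueSink v₀) :
    (S.le T →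
      Nat.card {g : Hom (CoPathQ S u₀) (CoPathQ T v₀) //
          g.comp (coPathPi T v₀) = coPathPi S u₀} =
        Nat.card {es : List Q.E // T.IsPathIn u₀ v₀ es}) ∧
    (¬ S.le T →
      Nat.card {g : Hom (CoPathQ S u₀) (CoPathQ T v₀) //
          g.comp (coPathPi T v₀) = coPathPi S u₀} =
        0) := by

  have h0 : S.IsPathIn u₀ u₀ [] := ⟨hS.1, rfl, by simp⟩
  constructor
  · intro hle
    apply Nat.card_congr
    refine ⟨fun gh => ⟨(gh.1.onV ⟨(u₀, []), h0⟩).1.2, ?_⟩,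
            fun p => ⟨toHom hle p.1 p.2, toHom_comm hle p.1 p.2⟩, ?_, ?_⟩
    · have hgV : ∀ x, (gh.1.onV x).1.1 = x.1.1 := fun x =>
        congrFun (congrArg Hom.onV gh.2) x
      have h := (gh.1.onV ⟨(u₀, []), h0⟩).2
      erw [hgV] at h; exact h
    · rintro ⟨g, hg⟩
      have hgV : ∀ x, (g.onV x).1.1 = x.1.1 := fun x =>
        congrFun (congrArg Hom.onV hg) x
      have hgE : ∀ y, (g.onE y).1.1 = y.1.1 := fun y =>
        congrFun (congrArg Hom.onE hg) y
      apply Subtype.ext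
      apply Hom.ext
      · funext x
        apply Subtype.ext
        obtain ⟨⟨a, es⟩, hx⟩ := x
        exact (onV_forced h0 g hgV hgE es a hx).symm
      · funext y
        apply Subtype.ext
        refine Prod.ext (hgE y).symm ?_
        have h2 := congrArg Subtype.val (g.ht y)
        exact (h2.trans (onV_forced h0 g hgV hgE y.1.2.2 y.1.2.1 y.2.1)).symm
    · rintro ⟨p, hp⟩
      rfl
  · intro hnle
    have : IsEmpty {g : Hom (CoPathQ S u₀) (CoPathQ T v₀) //
        g.comp (coPathPi T v₀) = coPathPi S u₀} := by
      refine ⟨fun gh => hnle ?_⟩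
      exact le_of_hom hreach gh.1
        (fun x => congrFun (congrArg Hom.onV gh.2) x)
        (fun y => congrFun (congrArg Hom.onE gh.2) y)
    exact Nat.card_of_isEmpty
end

section
/- Let Q be a finite acyclic quiver, S a subquiver with a unique source s₀, and T a subquiver with a unique sink u₀. Then every connected component of the fiber product P_{S,s₀} ×_Q I_{T,u₀}, regarded as a quiver over Q via the restricted structure map, is isomorphic over Q to a linear quiver tracing a path of Q: there exist n ≥ 0 and composable arrows α₁, …, α_n of Q such that the component is isomorphic over Q to the quiver with vertices 0, 1, …, n and one arrow k−1 ⟶ k for each 1 ≤ k ≤ n, whose structure map sends the arrow k−1 ⟶ k to α_k. -/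
open BQuiv

/-! ### Auxiliary development -/

namespace BQuiv
namespace Stmt13

variable {Q : BQuiv}

theorem vertAt_nil (a : Q.V) (k : ℕ) : vertAt Q a [] k = a := by
  cases k <;> rfl

theorem vertAt_zero (a : Q.V) (l : List Q.E) : vertAt Q a l 0 = a := by
  cases l <;> rfl

theorem isPathFrom_vertAt {a b : Q.V} {es : List Q.E} (h : Q.IsPathFrom a b es) :
    vertAt Q a es es.length = b := by
  induction es generalizing a with
  | nil => exact h
  | cons e es ih => exact ih h.2

theorem vertAt_append {a : Q.V} (p q : List Q.E) {j : ℕ} (hj : j ≤ p.length) :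
    vertAt Q a (p ++ q) j = vertAt Q a p j := by
  induction p generalizing a j with
  | nil =>
      have : j = 0 := Nat.le_zero.mp hj
      subst this; rw [vertAt_zero, vertAt_zero]
  | cons e es ih =>
      cases j with
      | zero => rfl
      | succ j => exact ih (Nat.succ_le_succ_iff.mp hj)

theorem vertAt_take {a : Q.V} (l : List Q.E) {j k : ℕ} (hj : j ≤ k) :
    vertAt Q a (l.take k) j = vertAt Q a l j := by
  induction l generalizing a j k with
  | nil => simp
  | cons e es ih =>
      cases k with
      | zero =>
          have : j = 0 := Nat.le_zero.mp hj
          subst this; rfl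
      | succ k =>
          cases j with
          | zero => rfl
          | succ j => exact ih (Nat.succ_le_succ_iff.mp hj)

theorem vertAt_drop {a : Q.V} (l : List Q.E) (m i : ℕ) :
    vertAt Q a l (m + i) = vertAt Q (vertAt Q a l m) (l.drop m) i := by
  induction l generalizing a m with
  | nil => simp [vertAt_nil]
  | cons e es ih =>
      cases m with
      | zero => rw [Nat.zero_add]; rfl
      | succ m =>
          rw [Nat.succ_add]
          exact ih m

theorem isPathFrom_take {a b : Q.V} {l : List Q.E} (h : Q.IsPathFrom a b l) (k : ℕ) :
    Q.IsPathFrom a (vertAt Q a l k) (l.take k) := by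
  induction l generalizing a k with
  | nil => cases k <;> exact rfl
  | cons e es ih =>
      cases k with
      | zero => rfl
      | succ k => exact ⟨h.1, ih h.2 k⟩

theorem isPathFrom_drop {a b : Q.V} {l : List Q.E} (h : Q.IsPathFrom a b l) (k : ℕ) :
    Q.IsPathFrom (vertAt Q a l k) b (l.drop k) := by
  induction l generalizing a k with
  | nil => cases k <;> exact h
  | cons e es ih =>
      cases k with
      | zero => exact h
      | succ k => exact ih h.2 k


section Main

variable (S T : Sub Q) (s₀ u₀ : Q.V)

/-- `k` is a valid splitting point of the edge list `L`. -/
def valid (L : List Q.E) (k : ℕ) : Prop :=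
  S.IsPathIn s₀ (vertAt Q s₀ L k) (L.take k) ∧
  T.IsPathIn (vertAt Q s₀ L k) u₀ (L.drop k)

/-- The fiber-product vertex associated to a valid splitting point. -/
def mkVert (L : List Q.E) (k : ℕ) (h : valid S T s₀ u₀ L k) :
    (Fib (pathPi S s₀) (coPathPi T u₀)).V :=
  ⟨(⟨(vertAt Q s₀ L k, L.take k), h.1⟩, ⟨(vertAt Q s₀ L k, L.drop k), h.2⟩), rfl⟩

/-- The concatenated edge list of a fiber-product vertex. -/
def concatOf (w : (Fib (pathPi S s₀) (coPathPi T u₀)).V) : List Q.E :=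
  w.1.1.1.2 ++ w.1.2.1.2

/-- The splitting point of a fiber-product vertex. -/
def splitOf (w : (Fib (pathPi S s₀) (coPathPi T u₀)).V) : ℕ :=
  w.1.1.1.2.length

theorem w_path (w : (Fib (pathPi S s₀) (coPathPi T u₀)).V) :
    Q.IsPathFrom s₀ u₀ (concatOf S T s₀ u₀ w) := by
  obtain ⟨⟨⟨⟨v, p⟩, hp⟩, ⟨⟨v', q⟩, hq⟩⟩, hvv⟩ := w
  have hvv' : v = v' := hvv
  exact hp.2.1.append (hvv' ▸ hq.2.1)

theorem splitOf_le (w : (Fib (pathPi S s₀) (coPathPi T u₀)).V) :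
    splitOf S T s₀ u₀ w ≤ (concatOf S T s₀ u₀ w).length := by
  simp [splitOf, concatOf]

theorem valid_of (w : (Fib (pathPi S s₀) (coPathPi T u₀)).V) :
    valid S T s₀ u₀ (concatOf S T s₀ u₀ w) (splitOf S T s₀ u₀ w) := by
  obtain ⟨⟨⟨⟨v, p⟩, hp⟩, ⟨⟨v', q⟩, hq⟩⟩, hvv⟩ := w
  have hvv' : v = v' := hvv
  dsimp [valid, concatOf, splitOf]
  have hv : vertAt Q s₀ (p ++ q) p.length = v := by
    rw [vertAt_append p q le_rfl]
    exact isPathFrom_vertAt hp.2.1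
  rw [hv, List.take_left, List.drop_left]
  exact ⟨hp, hvv' ▸ hq⟩

theorem vert_eq_mkVert (w : (Fib (pathPi S s₀) (coPathPi T u₀)).V) :
    w = mkVert S T s₀ u₀ (concatOf S T s₀ u₀ w) (splitOf S T s₀ u₀ w)
      (valid_of S T s₀ u₀ w) := by
  obtain ⟨⟨⟨⟨v, p⟩, hp⟩, ⟨⟨v', q⟩, hq⟩⟩, hvv⟩ := w
  have hvv' : v = v' := hvv
  have hv : vertAt Q s₀ (p ++ q) p.length = v := by
    rw [vertAt_append p q le_rfl]
    exact isPathFrom_vertAt hp.2.1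
  apply Subtype.ext
  dsimp [mkVert, concatOf, splitOf]
  rw [Prod.ext_iff]
  constructor <;> apply Subtype.ext <;>
    simp [List.take_left, List.drop_left, hv, hvv']

theorem vert_inj {w₁ w₂ : (Fib (pathPi S s₀) (coPathPi T u₀)).V}
    (hc : concatOf S T s₀ u₀ w₁ = concatOf S T s₀ u₀ w₂)
    (hs : splitOf S T s₀ u₀ w₁ = splitOf S T s₀ u₀ w₂) : w₁ = w₂ := by
  obtain ⟨⟨⟨⟨v₁, p₁⟩, hp₁⟩, ⟨⟨v₁', q₁⟩, hq₁⟩⟩, h₁⟩ := w₁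
  obtain ⟨⟨⟨⟨v₂, p₂⟩, hp₂⟩, ⟨⟨v₂', q₂⟩, hq₂⟩⟩, h₂⟩ := w₂
  dsimp [concatOf, splitOf] at hc hs
  obtain ⟨hp, hq⟩ := List.append_inj hc hs
  have e₁ : vertAt Q s₀ p₁ p₁.length = v₁ := isPathFrom_vertAt hp₁.2.1
  have e₂ : vertAt Q s₀ p₂ p₂.length = v₂ := isPathFrom_vertAt hp₂.2.1
  have hv : v₁ = v₂ := by rw [← e₁, ← e₂, hp]
  have h₁' : v₁ = v₁' := h₁
  have h₂' : v₂ = v₂' := h₂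
  have hv' : v₁' = v₂' := by rw [← h₁', ← h₂', hv]
  apply Subtype.ext
  rw [Prod.ext_iff]
  constructor <;> apply Subtype.ext <;> simp [hp, hq, hv, hv']

theorem splitOf_mkVert (L : List Q.E) (k : ℕ) (h : valid S T s₀ u₀ L k)
    (hk : k ≤ L.length) : splitOf S T s₀ u₀ (mkVert S T s₀ u₀ L k h) = k := by
  simp [splitOf, mkVert, List.length_take, Nat.min_eq_left hk]

theorem concatOf_mkVert (L : List Q.E) (k : ℕ) (h : valid S T s₀ u₀ L k) :
    concatOf S T s₀ u₀ (mkVert S T s₀ u₀ L k h) = L := by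
  simp [concatOf, mkVert, List.take_append_drop]

theorem mem_take_succ (L : List Q.E) (k : ℕ) (hk : k < L.length) :
    L[k] ∈ L.take (k + 1) := by
  have h : k < (L.take (k + 1)).length := by
    simp [List.length_take]; omega
  have : (L.take (k + 1))[k]'h = L[k] := List.getElem_take
  rw [← this]
  exact List.getElem_mem h

theorem mem_drop_self (L : List Q.E) (k : ℕ) (hk : k < L.length) :
    L[k] ∈ L.drop k := by
  rw [List.drop_eq_getElem_cons hk]
  exact List.mem_cons_self

/-- The fiber-product edge associated to two consecutive valid splitting points. -/
def mkEdge (L : List Q.E) (hL : Q.IsPathFrom s₀ u₀ L) (k : ℕ) (hk : k < L.length)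
    (h1 : valid S T s₀ u₀ L k) (h2 : valid S T s₀ u₀ L (k + 1)) :
    (Fib (pathPi S s₀) (coPathPi T u₀)).E :=
  ⟨(⟨((vertAt Q s₀ L k, L.take k), L.get ⟨k, hk⟩),
      h1.1, h2.1.2.2 _ (mem_take_succ L k hk), vertAt_s hL ⟨k, hk⟩⟩,
    ⟨(L.get ⟨k, hk⟩, (vertAt Q s₀ L (k + 1), L.drop (k + 1))),
      h2.2, h1.2.2.2 _ (mem_drop_self L k hk), vertAt_t hL ⟨k, hk⟩⟩), rfl⟩

theorem mkEdge_s (L : List Q.E) (hL : Q.IsPathFrom s₀ u₀ L) (k : ℕ) (hk : k < L.length)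
    (h1 : valid S T s₀ u₀ L k) (h2 : valid S T s₀ u₀ L (k + 1)) :
    (Fib (pathPi S s₀) (coPathPi T u₀)).s (mkEdge S T s₀ u₀ L hL k hk h1 h2) =
      mkVert S T s₀ u₀ L k h1 := by
  apply Subtype.ext
  dsimp [mkEdge, mkVert, Fib, PathQ, CoPathQ]
  rw [Prod.ext_iff]
  refine ⟨rfl, ?_⟩
  apply Subtype.ext
  rw [Prod.ext_iff]
  exact ⟨vertAt_s hL ⟨k, hk⟩, (List.drop_eq_getElem_cons hk).symm⟩

theorem mkEdge_t (L : List Q.E) (hL : Q.IsPathFrom s₀ u₀ L) (k : ℕ) (hk : k < L.length)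
    (h1 : valid S T s₀ u₀ L k) (h2 : valid S T s₀ u₀ L (k + 1)) :
    (Fib (pathPi S s₀) (coPathPi T u₀)).t (mkEdge S T s₀ u₀ L hL k hk h1 h2) =
      mkVert S T s₀ u₀ L (k + 1) h2 := by
  apply Subtype.ext
  dsimp [mkEdge, mkVert, Fib, PathQ, CoPathQ]
  rw [Prod.ext_iff]
  constructor
  · apply Subtype.ext
    rw [Prod.ext_iff]
    refine ⟨vertAt_t hL ⟨k, hk⟩, ?_⟩
    have := List.take_concat_get hk
    rw [List.concat_eq_append] at this
    exact this
  · rfl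

theorem edge_concat (e : (Fib (pathPi S s₀) (coPathPi T u₀)).E) :
    concatOf S T s₀ u₀ ((Fib (pathPi S s₀) (coPathPi T u₀)).s e) =
      concatOf S T s₀ u₀ ((Fib (pathPi S s₀) (coPathPi T u₀)).t e) := by
  obtain ⟨⟨⟨⟨⟨v, p⟩, α⟩, h1⟩, ⟨⟨β, v', q⟩, h2⟩⟩, hαβ⟩ := e
  have hαβ' : α = β := hαβ
  dsimp [concatOf, Fib, PathQ, CoPathQ]
  rw [hαβ']
  simp

theorem edge_split (e : (Fib (pathPi S s₀) (coPathPi T u₀)).E) :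
    splitOf S T s₀ u₀ ((Fib (pathPi S s₀) (coPathPi T u₀)).t e) =
      splitOf S T s₀ u₀ ((Fib (pathPi S s₀) (coPathPi T u₀)).s e) + 1 := by
  obtain ⟨⟨⟨⟨⟨v, p⟩, α⟩, h1⟩, ⟨⟨β, v', q⟩, h2⟩⟩, hαβ⟩ := e
  simp [splitOf, Fib, PathQ, CoPathQ]

theorem edge_alpha (e : (Fib (pathPi S s₀) (coPathPi T u₀)).E) :
    ∃ hlt : splitOf S T s₀ u₀ ((Fib (pathPi S s₀) (coPathPi T u₀)).s e) <
        (concatOf S T s₀ u₀ ((Fib (pathPi S s₀) (coPathPi T u₀)).s e)).length,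
      (fibHom (pathPi S s₀) (coPathPi T u₀)).onE e =
        (concatOf S T s₀ u₀ ((Fib (pathPi S s₀) (coPathPi T u₀)).s e))[
          splitOf S T s₀ u₀ ((Fib (pathPi S s₀) (coPathPi T u₀)).s e)]'hlt := by
  obtain ⟨⟨⟨⟨⟨v, p⟩, α⟩, h1⟩, ⟨⟨β, v', q⟩, h2⟩⟩, hαβ⟩ := e
  have hαβ' : α = β := hαβ
  refine ⟨by simp [splitOf, concatOf, Fib, PathQ, CoPathQ], ?_⟩
  dsimp [splitOf, concatOf, fibHom, pathPi, Fib, PathQ, CoPathQ]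
  show α = (p ++ β :: q)[p.length]'(by simp); rw [List.getElem_append_right le_rfl]
  simp [hαβ']

theorem edge_inj {e₁ e₂ : (Fib (pathPi S s₀) (coPathPi T u₀)).E}
    (h : (Fib (pathPi S s₀) (coPathPi T u₀)).s e₁ =
      (Fib (pathPi S s₀) (coPathPi T u₀)).s e₂) : e₁ = e₂ := by
  obtain ⟨⟨⟨⟨⟨v₁, p₁⟩, α₁⟩, h₁⟩, ⟨⟨β₁, v₁', q₁⟩, g₁⟩⟩, hb₁⟩ := e₁
  obtain ⟨⟨⟨⟨⟨v₂, p₂⟩, α₂⟩, h₂⟩, ⟨⟨β₂, v₂', q₂⟩, g₂⟩⟩, hb₂⟩ := e₂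
  have hb₁' : α₁ = β₁ := hb₁
  have hb₂' : α₂ = β₂ := hb₂
  replace h := Prod.ext_iff.mp (Subtype.ext_iff.mp h)
  obtain ⟨ha, hb⟩ := h
  replace ha := Subtype.ext_iff.mp ha; replace hb := Subtype.ext_iff.mp hb
  dsimp [Fib, PathQ, CoPathQ] at ha hb
  rw [Prod.ext_iff] at ha hb
  obtain ⟨hv, hp⟩ := ha
  obtain ⟨-, hcons⟩ := hb
  dsimp at hv hp hcons
  have hβ : β₁ = β₂ := (List.cons.injEq _ _ _ _ ▸ hcons).1
  have hq : q₁ = q₂ := (List.cons.injEq _ _ _ _ ▸ hcons).2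
  have hα : α₁ = α₂ := by rw [hb₁', hb₂', hβ]
  have hv' : v₁' = v₂' := by
    have t₁ : Q.t β₁ = v₁' := g₁.2.2
    have t₂ : Q.t β₂ = v₂' := g₂.2.2
    rw [← t₁, ← t₂, hβ]
  apply Subtype.ext
  rw [Prod.ext_iff]
  constructor <;> apply Subtype.ext <;> simp [hv, hp, hq, hα, hβ, hv']

theorem adj_symm {X : BQuiv} {v w : X.V} (h : Adj X v w) : Adj X w v := by
  obtain ⟨e, h | h⟩ := h
  exacts [⟨e, Or.inr h⟩, ⟨e, Or.inl h⟩]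

theorem conn_symm {X : BQuiv} {v w : X.V} (h : Conn X v w) : Conn X w v :=
  by
  induction h with
  | refl => exact Relation.ReflTransGen.refl
  | tail _ hab ih => exact Relation.ReflTransGen.head (adj_symm hab) ih

theorem conn_mk (L : List Q.E) (hL : Q.IsPathFrom s₀ u₀ L) {i j : ℕ} (hij : i ≤ j)
    (hjL : j ≤ L.length) (hv : ∀ x, i ≤ x → x ≤ j → valid S T s₀ u₀ L x) :
    Conn (Fib (pathPi S s₀) (coPathPi T u₀))
      (mkVert S T s₀ u₀ L i (hv i le_rfl hij))
      (mkVert S T s₀ u₀ L j (hv j hij le_rfl)) := by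
  induction j, hij using Nat.le_induction with
  | base => exact Relation.ReflTransGen.refl
  | succ j hij ih =>
      have hjL' : j ≤ L.length := by omega
      have hjlt : j < L.length := by omega
      have step := ih hjL' (fun x hx hxj => hv x hx (by omega))
      refine step.tail ⟨mkEdge S T s₀ u₀ L hL j hjlt
        (hv j hij (by omega)) (hv (j + 1) (by omega) le_rfl), Or.inl ⟨?_, ?_⟩⟩
      · exact mkEdge_s S T s₀ u₀ L hL j hjlt _ _
      · exact mkEdge_t S T s₀ u₀ L hL j hjlt _ _

theorem conn_invariant (v₀ w : (Fib (pathPi S s₀) (coPathPi T u₀)).V)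
    (h : Conn (Fib (pathPi S s₀) (coPathPi T u₀)) v₀ w) :
    concatOf S T s₀ u₀ w = concatOf S T s₀ u₀ v₀ ∧
    ∀ i, min (splitOf S T s₀ u₀ v₀) (splitOf S T s₀ u₀ w) ≤ i →
      i ≤ max (splitOf S T s₀ u₀ v₀) (splitOf S T s₀ u₀ w) →
      valid S T s₀ u₀ (concatOf S T s₀ u₀ v₀) i := by
  induction h with
  | refl =>
      refine ⟨rfl, fun i h1 h2 => ?_⟩
      have : i = splitOf S T s₀ u₀ v₀ := by omega
      rw [this]
      exact valid_of S T s₀ u₀ v₀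
  | @tail w w' hcw hadj ih =>
      obtain ⟨hconcat, hvalid⟩ := ih
      obtain ⟨e, he⟩ := hadj
      have hce := edge_concat S T s₀ u₀ e
      have hse := edge_split S T s₀ u₀ e
      rcases he with ⟨hs, ht⟩ | ⟨hs, ht⟩
      · -- w = s e, w' = t e
        have hc' : concatOf S T s₀ u₀ w' = concatOf S T s₀ u₀ v₀ := by
          rw [← ht, ← hce, hs, hconcat]
        have hsplit : splitOf S T s₀ u₀ w' = splitOf S T s₀ u₀ w + 1 := by
          rw [← ht, hse, hs]
        refine ⟨hc', fun i h1 h2 => ?_⟩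
        by_cases hi : i = splitOf S T s₀ u₀ w'
        · have hv0 := valid_of S T s₀ u₀ w'
          rw [hc'] at hv0
          rw [hi]
          exact hv0
        · exact hvalid i (by omega) (by omega)
      · -- w' = s e, w = t e
        have hc' : concatOf S T s₀ u₀ w' = concatOf S T s₀ u₀ v₀ := by
          rw [← hs, hce, ht, hconcat]
        have hsplit : splitOf S T s₀ u₀ w = splitOf S T s₀ u₀ w' + 1 := by
          rw [← ht, hse, hs]
        refine ⟨hc', fun i h1 h2 => ?_⟩
        by_cases hi : i = splitOf S T s₀ u₀ w'
        · have hv0 := valid_of S T s₀ u₀ w'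
          rw [hc'] at hv0
          rw [hi]
          exact hv0
        · exact hvalid i (by omega) (by omega)

theorem onV_eq (w : (Fib (pathPi S s₀) (coPathPi T u₀)).V) :
    (fibHom (pathPi S s₀) (coPathPi T u₀)).onV w =
      vertAt Q s₀ (concatOf S T s₀ u₀ w) (splitOf S T s₀ u₀ w) := by
  obtain ⟨⟨⟨⟨v, p⟩, hp⟩, ⟨⟨v', q⟩, hq⟩⟩, hvv⟩ := w
  dsimp [fibHom, pathPi, concatOf, splitOf]
  rw [vertAt_append p q le_rfl]
  exact (isPathFrom_vertAt hp.2.1).symm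

end Main

end Stmt13
end BQuiv


/-- Every connected component of the fiber product `P_{S,s₀} ×_Q
I_{T,u₀}` is isomorphic over `Q` to a linear quiver tracing a path of `Q`. -/
theorem component_pathQuiver_prod_copathQuiver
    (Q : BQuiv) [Fintype Q.V] [Fintype Q.E] (hQ : Q.IsAcyclic)
    (S T : Sub Q) (s₀ u₀ : Q.V)
    (hS : S.IsUniqueSource s₀) (hT : T.IsUniqueSink u₀) :
    ∀ v₀ : (Fib (pathPi S s₀) (coPathPi T u₀)).V,
      ∃ (a b : Q.V) (es : List Q.E) (h : Q.IsPathFrom a b es),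
        Nonempty (OverIso (componentHom (fibHom (pathPi S s₀) (coPathPi T u₀)) v₀)
          (traceHom Q a b es h)) := by
  intro v₀
  classical
  set L : List Q.E := Stmt13.concatOf S T s₀ u₀ v₀ with hLdef
  set k₀ : ℕ := Stmt13.splitOf S T s₀ u₀ v₀ with hk₀def
  have hL : Q.IsPathFrom s₀ u₀ L := Stmt13.w_path S T s₀ u₀ v₀
  have hk₀L : k₀ ≤ L.length := Stmt13.splitOf_le S T s₀ u₀ v₀
  have hk₀v : Stmt13.valid S T s₀ u₀ L k₀ := Stmt13.valid_of S T s₀ u₀ v₀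
  set Dm : Set ℕ := {j | j ≤ k₀ ∧ ∀ i, j ≤ i → i ≤ k₀ → Stmt13.valid S T s₀ u₀ L i} with hDm
  set DM : Set ℕ :=
    {j | k₀ ≤ j ∧ j ≤ L.length ∧ ∀ i, k₀ ≤ i → i ≤ j → Stmt13.valid S T s₀ u₀ L i} with hDM
  have hk₀Dm : k₀ ∈ Dm := ⟨le_rfl, fun i h1 h2 => by
    have h3 : i = k₀ := le_antisymm h2 h1
    rwa [h3]⟩
  have hk₀DM : k₀ ∈ DM := ⟨le_rfl, hk₀L, fun i h1 h2 => by
    have h3 : i = k₀ := le_antisymm h2 h1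
    rwa [h3]⟩
  set m := sInf Dm with hm
  set M := sSup DM with hM
  have hDMbdd : BddAbove DM := ⟨L.length, fun j hj => hj.2.1⟩
  have hmDm : m ∈ Dm := Nat.sInf_mem ⟨k₀, hk₀Dm⟩
  have hMDM : M ∈ DM := Nat.sSup_mem ⟨k₀, hk₀DM⟩ hDMbdd
  have hmk₀ : m ≤ k₀ := hmDm.1
  have hk₀M : k₀ ≤ M := hMDM.1
  have hML : M ≤ L.length := hMDM.2.1
  have hvalid : ∀ i, m ≤ i → i ≤ M → Stmt13.valid S T s₀ u₀ L i := by
    intro i h1 h2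
    rcases le_or_gt i k₀ with h | h
    · exact hmDm.2 i h1 h
    · exact hMDM.2.2 i h.le h2
  clear_value m M
  set a := vertAt Q s₀ L m with ha
  set b := vertAt Q s₀ L M with hb
  set es : List Q.E := (L.drop m).take (M - m) with hes
  have hlen : es.length = M - m := by
    rw [hes]
    simp only [List.length_take, List.length_drop]
    omega
  have hesPath : Q.IsPathFrom a b es := by
    have h1 := Stmt13.isPathFrom_drop hL m
    have h2 := Stmt13.isPathFrom_take h1 (M - m)
    have h3 : vertAt Q a (L.drop m) (M - m) = b := by
      rw [← Stmt13.vertAt_drop, hb]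
      congr 1
      omega
    rwa [h3] at h2
  have hvert : ∀ i, i ≤ M - m → vertAt Q a es i = vertAt Q s₀ L (m + i) := by
    intro i hi
    rw [hes, Stmt13.vertAt_take _ hi, ← Stmt13.vertAt_drop]
  have getElem_congr : ∀ (l₁ l₂ : List Q.E) (i₁ i₂ : ℕ) (h₁ : i₁ < l₁.length)
      (h₂ : i₂ < l₂.length), l₁ = l₂ → i₁ = i₂ → l₁[i₁]'h₁ = l₂[i₂]'h₂ := by
    rintro l₁ l₂ i₁ i₂ h₁ h₂ rfl rfl; rfl
  have hedge : ∀ (i : ℕ) (hi : i < M - m),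
      es[i]'(by omega) = L[m + i]'(by omega) := by
    intro i hi
    simp only [hes, List.getElem_take, List.getElem_drop]
  have hbounds : ∀ w : (Fib (pathPi S s₀) (coPathPi T u₀)).V, Conn (Fib (pathPi S s₀) (coPathPi T u₀)) v₀ w →
      Stmt13.concatOf S T s₀ u₀ w = L ∧ m ≤ Stmt13.splitOf S T s₀ u₀ w ∧
        Stmt13.splitOf S T s₀ u₀ w ≤ M := by
    intro w hw
    obtain ⟨hc, hv⟩ := Stmt13.conn_invariant S T s₀ u₀ v₀ w hw
    refine ⟨hc, ?_, ?_⟩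
    · rcases le_or_gt k₀ (Stmt13.splitOf S T s₀ u₀ w) with h | h
      · exact le_trans hmk₀ h
      · have hmem : Stmt13.splitOf S T s₀ u₀ w ∈ Dm :=
          ⟨h.le, fun i h1 h2 => hv i (by omega) (by omega)⟩
        exact hm ▸ Nat.sInf_le hmem
    · rcases le_or_gt (Stmt13.splitOf S T s₀ u₀ w) k₀ with h | h
      · exact le_trans h hk₀M
      · have hwL : Stmt13.splitOf S T s₀ u₀ w ≤ L.length := by
          have h4 := Stmt13.splitOf_le S T s₀ u₀ w
          rwa [hc] at h4
        have hmem : Stmt13.splitOf S T s₀ u₀ w ∈ DM :=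
          ⟨h.le, hwL, fun i h1 h2 => hv i (by omega) (by omega)⟩
        exact hM ▸ le_csSup hDMbdd hmem
  have hv₀eq : v₀ = Stmt13.mkVert S T s₀ u₀ L k₀ hk₀v := Stmt13.vert_eq_mkVert S T s₀ u₀ v₀
  have hconn : ∀ j (h1 : m ≤ j) (h2 : j ≤ M),
      Conn (Fib (pathPi S s₀) (coPathPi T u₀)) v₀ (Stmt13.mkVert S T s₀ u₀ L j (hvalid j h1 h2)) := by
    intro j h1 h2
    rw [hv₀eq]
    rcases le_or_gt k₀ j with h | h
    · exact Stmt13.conn_mk S T s₀ u₀ L hL h (le_trans h2 hML)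
        (fun x hx1 hx2 => hvalid x (by omega) (by omega))
    · exact Stmt13.conn_symm (Stmt13.conn_mk S T s₀ u₀ L hL h.le hk₀L
        (fun x hx1 hx2 => hvalid x (by omega) (by omega)))
  have hlt1 : ∀ w : (Component (Fib (pathPi S s₀) (coPathPi T u₀)) v₀).V,
      Stmt13.splitOf S T s₀ u₀ w.1 - m < es.length + 1 := by
    intro w
    obtain ⟨-, h1, h2⟩ := hbounds w.1 w.2
    omega
  have hconnT : ∀ e : (Component (Fib (pathPi S s₀) (coPathPi T u₀)) v₀).E, Conn (Fib (pathPi S s₀) (coPathPi T u₀)) v₀ ((Fib (pathPi S s₀) (coPathPi T u₀)).t e.1) := by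
    intro e
    exact e.2.tail ⟨e.1, Or.inl ⟨rfl, rfl⟩⟩
  have hlt2 : ∀ e : (Component (Fib (pathPi S s₀) (coPathPi T u₀)) v₀).E,
      Stmt13.splitOf S T s₀ u₀ ((Fib (pathPi S s₀) (coPathPi T u₀)).s e.1) - m < es.length := by
    intro e
    obtain ⟨-, h1, -⟩ := hbounds ((Fib (pathPi S s₀) (coPathPi T u₀)).s e.1) e.2
    obtain ⟨-, -, h2⟩ := hbounds ((Fib (pathPi S s₀) (coPathPi T u₀)).t e.1) (hconnT e)
    have h3 := Stmt13.edge_split S T s₀ u₀ e.1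
    omega
  refine ⟨a, b, es, hesPath, ⟨⟨⟨fun w => ⟨Stmt13.splitOf S T s₀ u₀ w.1 - m, hlt1 w⟩,
    fun e => ⟨Stmt13.splitOf S T s₀ u₀ ((Fib (pathPi S s₀) (coPathPi T u₀)).s e.1) - m, hlt2 e⟩, ?_, ?_⟩, ?_, ?_, ?_⟩⟩⟩
  · -- hs
    intro e
    apply Fin.ext
    rfl
  · -- ht
    intro e
    apply Fin.ext
    obtain ⟨-, h1, -⟩ := hbounds ((Fib (pathPi S s₀) (coPathPi T u₀)).s e.1) e.2
    obtain ⟨-, -, h2⟩ := hbounds ((Fib (pathPi S s₀) (coPathPi T u₀)).t e.1) (hconnT e)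
    have h3 := Stmt13.edge_split S T s₀ u₀ e.1
    show Stmt13.splitOf S T s₀ u₀ ((Fib (pathPi S s₀) (coPathPi T u₀)).s e.1) - m + 1 = Stmt13.splitOf S T s₀ u₀ ((Fib (pathPi S s₀) (coPathPi T u₀)).t e.1) - m
    omega
  · -- comm
    apply Hom.ext
    · funext w
      show vertAt Q a es (Stmt13.splitOf S T s₀ u₀ w.1 - m) =
        (fibHom (pathPi S s₀) (coPathPi T u₀)).onV w.1
      obtain ⟨hc, h1, h2⟩ := hbounds w.1 w.2
      rw [hvert _ (by omega), Stmt13.onV_eq, hc]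
      congr 1
      omega
    · funext e
      obtain ⟨hc, h1, -⟩ := hbounds ((Fib (pathPi S s₀) (coPathPi T u₀)).s e.1) e.2
      obtain ⟨-, -, h2⟩ := hbounds ((Fib (pathPi S s₀) (coPathPi T u₀)).t e.1) (hconnT e)
      have h3 := Stmt13.edge_split S T s₀ u₀ e.1
      obtain ⟨hlt, hα⟩ := Stmt13.edge_alpha S T s₀ u₀ e.1
      show es[Stmt13.splitOf S T s₀ u₀
          ((Fib (pathPi S s₀) (coPathPi T u₀)).s e.1) - m]'(hlt2 e) =
        (fibHom (pathPi S s₀) (coPathPi T u₀)).onE e.1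
      rw [hα, hedge _ (by omega)]
      exact getElem_congr _ _ _ _ _ _ hc.symm (by omega)
  · -- bijV
    constructor
    · intro w₁ w₂ hww
      have h12 : Stmt13.splitOf S T s₀ u₀ w₁.1 - m = Stmt13.splitOf S T s₀ u₀ w₂.1 - m :=
        congrArg Fin.val hww
      obtain ⟨hc₁, hm₁, -⟩ := hbounds w₁.1 w₁.2
      obtain ⟨hc₂, hm₂, -⟩ := hbounds w₂.1 w₂.2
      have hsp : Stmt13.splitOf S T s₀ u₀ w₁.1 = Stmt13.splitOf S T s₀ u₀ w₂.1 := by omega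
      exact Subtype.ext (Stmt13.vert_inj S T s₀ u₀ (hc₁.trans hc₂.symm) hsp)
    · intro j
      have hj1 : m ≤ m + j.1 := by omega
      have hj2 : m + j.1 ≤ M := by
        have := j.2
        omega
      refine ⟨⟨Stmt13.mkVert S T s₀ u₀ L (m + j.1) (hvalid _ hj1 hj2), hconn _ hj1 hj2⟩, ?_⟩
      apply Fin.ext
      show Stmt13.splitOf S T s₀ u₀
        (Stmt13.mkVert S T s₀ u₀ L (m + j.1) (hvalid _ hj1 hj2)) - m = j.1
      rw [Stmt13.splitOf_mkVert S T s₀ u₀ L _ _ (by omega)]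
      omega
  · -- bijE
    constructor
    · intro e₁ e₂ hee
      have h12 : Stmt13.splitOf S T s₀ u₀ ((Fib (pathPi S s₀) (coPathPi T u₀)).s e₁.1) - m =
          Stmt13.splitOf S T s₀ u₀ ((Fib (pathPi S s₀) (coPathPi T u₀)).s e₂.1) - m := congrArg Fin.val hee
      obtain ⟨hc₁, hm₁, -⟩ := hbounds ((Fib (pathPi S s₀) (coPathPi T u₀)).s e₁.1) e₁.2
      obtain ⟨hc₂, hm₂, -⟩ := hbounds ((Fib (pathPi S s₀) (coPathPi T u₀)).s e₂.1) e₂.2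
      have hsp : Stmt13.splitOf S T s₀ u₀ ((Fib (pathPi S s₀) (coPathPi T u₀)).s e₁.1) =
          Stmt13.splitOf S T s₀ u₀ ((Fib (pathPi S s₀) (coPathPi T u₀)).s e₂.1) := by omega
      have hss : (Fib (pathPi S s₀) (coPathPi T u₀)).s e₁.1 = (Fib (pathPi S s₀) (coPathPi T u₀)).s e₂.1 :=
        Stmt13.vert_inj S T s₀ u₀ (hc₁.trans hc₂.symm) hsp
      exact Subtype.ext (Stmt13.edge_inj S T s₀ u₀ hss)
    · intro j
      have hjM : m + j.1 < M := by
        have := j.2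
        omega
      have hjL : m + j.1 < L.length := by omega
      refine ⟨⟨Stmt13.mkEdge S T s₀ u₀ L hL (m + j.1) hjL
        (hvalid _ (by omega) (by omega)) (hvalid _ (by omega) (by omega)), ?_⟩, ?_⟩
      · rw [Stmt13.mkEdge_s]
        exact hconn _ (by omega) (by omega)
      · apply Fin.ext
        show Stmt13.splitOf S T s₀ u₀
          ((Fib (pathPi S s₀) (coPathPi T u₀)).s (Stmt13.mkEdge S T s₀ u₀ L hL (m + j.1) hjL
            (hvalid _ (by omega) (by omega)) (hvalid _ (by omega) (by omega)))) - m = j.1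
        rw [Stmt13.mkEdge_s, Stmt13.splitOf_mkVert S T s₀ u₀ L _ _ (by omega)]
        omega
end
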